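/- arXiv:2002.06117 — 5 statements merged into one kernel-verified Lean document; each statement's English description precedes it below -/
import Mathlib

section
/- Let P and Q be Borel probability measures on ℝ^d with finite first moments. Then for every coupling π of P and Q, |ε_P − ε_Q| ≤ 2 ∫ ‖x − y‖ dπ(x,y); consequently |ε_P − ε_Q| ≤ 2 d_W(P,Q), where d_W(P,Q) denotes the infimum of ∫ ‖x − y‖ dπ(x,y) over all couplings π of P and Q. -/
open MeasureTheory
open scoped ENNReal RealInnerProductSpace

noncomputable section

/-- Euclidean space `ℝ^d`. -/
abbrev Euc (d : ℕ) := EuclideanSpace ℝ (Fin d)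

/-- The mean `μ_P` of a measure on `ℝ^d`. -/
def meanVec (d : ℕ) (P : Measure (Euc d)) : Euc d := ∫ x, x ∂P

/-- `ε_P`: the infimum over unit vectors `u` of `∫ |⟨u, x − μ_P⟩| dP`. -/
def epsMin (d : ℕ) (P : Measure (Euc d)) : ℝ :=
  ⨅ u : {u : Euc d // ‖u‖ = 1}, ∫ x, |⟪(u : Euc d), x - meanVec d P⟫| ∂P

/-- Membership in the class `𝒫_d`: Borel probability measures with finite first
moment giving mass `< 1` to every affine hyperplane. -/
def MemP (d : ℕ) (P : Measure (Euc d)) : Prop :=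
  IsProbabilityMeasure P ∧ Integrable (fun x : Euc d => ‖x‖) P ∧
    ∀ u : Euc d, u ≠ 0 → ∀ c : ℝ, P {x : Euc d | ⟪u, x⟫ = c} < 1

/-- Membership in the class `ℱ_d` of upper semi-continuous log-concave densities. -/
def MemF (d : ℕ) (f : Euc d → ℝ) : Prop :=
  UpperSemicontinuous f ∧ (∀ x, 0 ≤ f x) ∧ (∫ x, f x = 1) ∧
    ∀ x y : Euc d, ∀ t : ℝ, 0 ≤ t → t ≤ 1 →
      f x ^ (1 - t) * f y ^ t ≤ f ((1 - t) • x + t • y)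

/-- Positive part of `log t`, as an extended nonneg real (with `log 0 = −∞` having
positive part `0`). -/
def logPosPart (t : ℝ) : ℝ≥0∞ := ENNReal.ofReal (Real.log t)

/-- Negative part of `log t`, as an extended nonneg real, with `log 0 = −∞`. -/
def logNegPart (t : ℝ) : ℝ≥0∞ := if t = 0 then ⊤ else ENNReal.ofReal (-(Real.log t))

/-- The integral `∫ log f dP`, valued in `[−∞,∞]`. -/
def eLogInt (d : ℕ) (P : Measure (Euc d)) (f : Euc d → ℝ) : EReal :=
  ((∫⁻ x, logPosPart (f x) ∂P : ℝ≥0∞) : EReal) - ((∫⁻ x, logNegPart (f x) ∂P : ℝ≥0∞) : EReal)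

/-- `f` is a log-concave projection of `P`. -/
def IsLCP (d : ℕ) (P : Measure (Euc d)) (f : Euc d → ℝ) : Prop :=
  MemF d f ∧ ∀ g : Euc d → ℝ, MemF d g → eLogInt d P g ≤ eLogInt d P f

/-- Squared Hellinger distance between densities on `ℝ^d`. -/
def dH2 (d : ℕ) (f g : Euc d → ℝ) : ℝ := ∫ x, (Real.sqrt (f x) - Real.sqrt (g x)) ^ 2

/-- Hellinger distance. -/
def dH (d : ℕ) (f g : Euc d → ℝ) : ℝ := Real.sqrt (dH2 d f g)

/-- `π` is a coupling of `P` and `Q`. -/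
def IsCoupling (d : ℕ) (π : Measure (Euc d × Euc d)) (P Q : Measure (Euc d)) : Prop :=
  IsProbabilityMeasure π ∧ π.map Prod.fst = P ∧ π.map Prod.snd = Q

/-- The empirical distribution of the points `X 0, …, X (n−1)`. -/
def empDist (d n : ℕ) (X : Fin n → Euc d) : Measure (Euc d) :=
  ((n : ℝ≥0∞))⁻¹ • ∑ i : Fin n, Measure.dirac (X i)

/-- The `L¹`-Wasserstein distance, as an infimum over couplings. -/
def wassersteinDist (d : ℕ) (P Q : Measure (Euc d)) : ℝ :=
  sInf {r : ℝ | ∃ π : Measure (Euc d × Euc d), IsCoupling d π P Q ∧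
    r = ∫ p : Euc d × Euc d, ‖p.1 - p.2‖ ∂π}

lemma one_side (d : ℕ) (P Q : Measure (Euc d))
    (hP2 : Integrable (fun x : Euc d => ‖x‖) P)
    (hQ2 : Integrable (fun x : Euc d => ‖x‖) Q)
    (π : Measure (Euc d × Euc d)) (hπ : IsCoupling d π P Q) :
    epsMin d P ≤ epsMin d Q + 2 * ∫ p : Euc d × Euc d, ‖p.1 - p.2‖ ∂π := by
  obtain ⟨hπ1, hπP, hπQ⟩ := hπ
  haveI := hπ1
  set mP := meanVec d P with hmPdef
  set mQ := meanVec d Q with hmQdef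
  set W := ∫ p : Euc d × Euc d, ‖p.1 - p.2‖ ∂π with hWdef
  have hW0 : 0 ≤ W := integral_nonneg fun p => norm_nonneg _
  -- integrability of coordinates w.r.t. π
  have hfst : Integrable (fun p : Euc d × Euc d => ‖p.1‖) π := by
    have h := hP2
    rw [← hπP] at h
    exact (integrable_map_measure continuous_norm.aestronglyMeasurable
      measurable_fst.aemeasurable).mp h
  have hsnd : Integrable (fun p : Euc d × Euc d => ‖p.2‖) π := by
    have h := hQ2
    rw [← hπQ] at h
    exact (integrable_map_measure continuous_norm.aestronglyMeasurable
      measurable_snd.aemeasurable).mp h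
  have hWint : Integrable (fun p : Euc d × Euc d => ‖p.1 - p.2‖) π := by
    refine (hfst.add hsnd).mono'
      ((continuous_fst.sub continuous_snd).norm.aestronglyMeasurable) ?_
    filter_upwards with p
    simpa using norm_sub_le p.1 p.2
  -- the means
  have hIfst : Integrable (fun p : Euc d × Euc d => p.1) π :=
    hfst.mono' continuous_fst.aestronglyMeasurable
      (Filter.Eventually.of_forall fun p => le_refl _)
  have hIsnd : Integrable (fun p : Euc d × Euc d => p.2) π :=
    hsnd.mono' continuous_snd.aestronglyMeasurable
      (Filter.Eventually.of_forall fun p => le_refl _)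
  have hmeanP : mP = ∫ p : Euc d × Euc d, p.1 ∂π := by
    rw [hmPdef, meanVec, ← hπP]
    exact integral_map measurable_fst.aemeasurable aestronglyMeasurable_id
  have hmeanQ : mQ = ∫ p : Euc d × Euc d, p.2 ∂π := by
    rw [hmQdef, meanVec, ← hπQ]
    exact integral_map measurable_snd.aemeasurable aestronglyMeasurable_id
  have hmean : ‖mP - mQ‖ ≤ W := by
    rw [hmeanP, hmeanQ, ← integral_sub hIfst hIsnd]
    exact norm_integral_le_integral_norm _
  -- pointwise bound and the core estimate for each unit vector u
  have hF : ∀ u : Euc d, ‖u‖ = 1 →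
      ∫ x, |⟪u, x - mP⟫| ∂P ≤ (∫ x, |⟪u, x - mQ⟫| ∂Q) + 2 * W := by
    intro u hu
    have hcontP : Continuous fun x : Euc d => |⟪u, x - mP⟫| :=
      (continuous_const.inner (continuous_id.sub continuous_const)).abs
    have hcontQ : Continuous fun x : Euc d => |⟪u, x - mQ⟫| :=
      (continuous_const.inner (continuous_id.sub continuous_const)).abs
    have hPrw : ∫ x, |⟪u, x - mP⟫| ∂P = ∫ p : Euc d × Euc d, |⟪u, p.1 - mP⟫| ∂π := by
      rw [← hπP, integral_map measurable_fst.aemeasurable hcontP.aestronglyMeasurable]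
    have hQrw : ∫ x, |⟪u, x - mQ⟫| ∂Q = ∫ p : Euc d × Euc d, |⟪u, p.2 - mQ⟫| ∂π := by
      rw [← hπQ, integral_map measurable_snd.aemeasurable hcontQ.aestronglyMeasurable]
    have hintA : Integrable (fun p : Euc d × Euc d => |⟪u, p.1 - mP⟫|) π := by
      refine (hfst.add (integrable_const ‖mP‖)).mono'
        (hcontP.comp continuous_fst).aestronglyMeasurable ?_
      filter_upwards with p
      have h1 : |⟪u, p.1 - mP⟫| ≤ ‖u‖ * ‖p.1 - mP‖ := abs_real_inner_le_norm u _
      have h2 : ‖p.1 - mP‖ ≤ ‖p.1‖ + ‖mP‖ := norm_sub_le _ _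
      simp only [Pi.add_apply, Real.norm_eq_abs, abs_abs]
      rw [hu, one_mul] at h1
      linarith
    have hintB : Integrable (fun p : Euc d × Euc d => |⟪u, p.2 - mQ⟫|) π := by
      refine (hsnd.add (integrable_const ‖mQ‖)).mono'
        (hcontQ.comp continuous_snd).aestronglyMeasurable ?_
      filter_upwards with p
      have h1 : |⟪u, p.2 - mQ⟫| ≤ ‖u‖ * ‖p.2 - mQ‖ := abs_real_inner_le_norm u _
      have h2 : ‖p.2 - mQ‖ ≤ ‖p.2‖ + ‖mQ‖ := norm_sub_le _ _
      simp only [Pi.add_apply, Real.norm_eq_abs, abs_abs]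
      rw [hu, one_mul] at h1
      linarith
    have hintC : Integrable (fun p : Euc d × Euc d => ‖p.1 - p.2‖ + ‖mP - mQ‖) π :=
      hWint.add (integrable_const _)
    have hintD : Integrable
        (fun p : Euc d × Euc d => |⟪u, p.2 - mQ⟫| + (‖p.1 - p.2‖ + ‖mP - mQ‖)) π :=
      hintB.add hintC
    rw [hPrw, hQrw]
    have key : ∫ p : Euc d × Euc d, |⟪u, p.1 - mP⟫| ∂π ≤
        ∫ p : Euc d × Euc d, (|⟪u, p.2 - mQ⟫| + (‖p.1 - p.2‖ + ‖mP - mQ‖)) ∂π := by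
      refine integral_mono hintA hintD ?_
      intro p
      have h1 : |⟪u, p.1 - mP⟫| - |⟪u, p.2 - mQ⟫| ≤ |⟪u, p.1 - mP⟫ - ⟪u, p.2 - mQ⟫| :=
        abs_sub_abs_le_abs_sub _ _
      have h2 : ⟪u, p.1 - mP⟫ - ⟪u, p.2 - mQ⟫ = ⟪u, (p.1 - mP) - (p.2 - mQ)⟫ :=
        (inner_sub_right u _ _).symm
      have h3 : |⟪u, (p.1 - mP) - (p.2 - mQ)⟫| ≤ ‖u‖ * ‖(p.1 - mP) - (p.2 - mQ)‖ :=
        abs_real_inner_le_norm u _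
      have h4 : (p.1 - mP) - (p.2 - mQ) = (p.1 - p.2) - (mP - mQ) := by abel
      have h5 : ‖(p.1 - p.2) - (mP - mQ)‖ ≤ ‖p.1 - p.2‖ + ‖mP - mQ‖ := norm_sub_le _ _
      rw [h2, h4] at h1
      rw [h4] at h3
      rw [hu, one_mul] at h3
      simp only
      linarith
    have hsplit : ∫ p : Euc d × Euc d, (|⟪u, p.2 - mQ⟫| + (‖p.1 - p.2‖ + ‖mP - mQ‖)) ∂π =
        (∫ p : Euc d × Euc d, |⟪u, p.2 - mQ⟫| ∂π) + (W + ‖mP - mQ‖) := by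
      have hC : ∫ p : Euc d × Euc d, (‖p.1 - p.2‖ + ‖mP - mQ‖) ∂π = W + ‖mP - mQ‖ := by
        rw [integral_add hWint (integrable_const _), integral_const]
        simp
        exact hWdef.symm
      rw [integral_add hintB hintC, hC]
    rw [hsplit] at key
    linarith
  -- conclude, splitting on whether there is a unit vector
  by_cases hne : Nonempty {u : Euc d // ‖u‖ = 1}
  · have hbdd : BddBelow (Set.range fun u : {u : Euc d // ‖u‖ = 1} =>
        ∫ x, |⟪(u : Euc d), x - mP⟫| ∂P) := by
      refine ⟨0, ?_⟩
      rintro r ⟨u, rfl⟩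
      exact integral_nonneg fun x => abs_nonneg _
    rw [epsMin, epsMin, ← hmPdef, ← hmQdef, ← sub_le_iff_le_add]
    refine le_ciInf fun u => ?_
    rw [sub_le_iff_le_add]
    calc ⨅ v : {u : Euc d // ‖u‖ = 1}, ∫ x, |⟪(v : Euc d), x - mP⟫| ∂P
        ≤ ∫ x, |⟪(u : Euc d), x - mP⟫| ∂P := ciInf_le hbdd u
      _ ≤ _ := hF u u.2
  · haveI : IsEmpty {u : Euc d // ‖u‖ = 1} := not_nonempty_iff.mp hne
    have e1 : epsMin d P = 0 := by
      rw [epsMin, iInf, Set.range_eq_empty, Real.sInf_empty]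
    have e2 : epsMin d Q = 0 := by
      rw [epsMin, iInf, Set.range_eq_empty, Real.sInf_empty]
    rw [e1, e2]
    linarith

/-- `|ε_P − ε_Q| ≤ 2 ∫‖x−y‖ dπ` for every coupling `π`, and
consequently `|ε_P − ε_Q| ≤ 2 d_W(P,Q)`. -/
theorem stmt1 (d : ℕ) (P Q : Measure (Euc d))
    (hP1 : IsProbabilityMeasure P) (hQ1 : IsProbabilityMeasure Q)
    (hP2 : Integrable (fun x : Euc d => ‖x‖) P)
    (hQ2 : Integrable (fun x : Euc d => ‖x‖) Q) :
    (∀ π : Measure (Euc d × Euc d), IsCoupling d π P Q →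
      |epsMin d P - epsMin d Q| ≤ 2 * ∫ p : Euc d × Euc d, ‖p.1 - p.2‖ ∂π) ∧
    |epsMin d P - epsMin d Q| ≤ 2 * wassersteinDist d P Q := by
  have main : ∀ π : Measure (Euc d × Euc d), IsCoupling d π P Q →
      |epsMin d P - epsMin d Q| ≤ 2 * ∫ p : Euc d × Euc d, ‖p.1 - p.2‖ ∂π := by
    intro π hπ
    have h1 := one_side d P Q hP2 hQ2 π hπ
    obtain ⟨hπ1, hπP, hπQ⟩ := hπ
    haveI := hπ1
    have hfs : (Prod.fst ∘ Prod.swap : Euc d × Euc d → Euc d) = Prod.snd := rfl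
    have hss : (Prod.snd ∘ Prod.swap : Euc d × Euc d → Euc d) = Prod.fst := rfl
    have hswapc : IsCoupling d (π.map Prod.swap) Q P := by
      refine ⟨Measure.isProbabilityMeasure_map measurable_swap.aemeasurable, ?_, ?_⟩
      · rw [Measure.map_map measurable_fst measurable_swap, hfs]; exact hπQ
      · rw [Measure.map_map measurable_snd measurable_swap, hss]; exact hπP
    have hswapint : ∫ p : Euc d × Euc d, ‖p.1 - p.2‖ ∂(π.map Prod.swap) =
        ∫ p : Euc d × Euc d, ‖p.1 - p.2‖ ∂π := by
      rw [integral_map (f := fun p : Euc d × Euc d => ‖p.1 - p.2‖) measurable_swap.aemeasurable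
        (continuous_fst.sub continuous_snd).norm.aestronglyMeasurable]
      simp only [Prod.fst_swap, Prod.snd_swap]
      exact integral_congr_ae (Filter.Eventually.of_forall fun p => norm_sub_rev _ _)
    have h2 := one_side d Q P hQ2 hP2 _ hswapc
    rw [hswapint] at h2
    rw [abs_sub_le_iff]
    constructor <;> linarith
  refine ⟨main, ?_⟩
  haveI := hP1; haveI := hQ1
  have hprodc : IsCoupling d (P.prod Q) P Q := by
    refine ⟨inferInstance, ?_, ?_⟩
    · rw [Measure.map_fst_prod]; simp
    · rw [Measure.map_snd_prod]; simp
  have hSne : {r : ℝ | ∃ π : Measure (Euc d × Euc d), IsCoupling d π P Q ∧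
      r = ∫ p : Euc d × Euc d, ‖p.1 - p.2‖ ∂π}.Nonempty :=
    ⟨_, P.prod Q, hprodc, rfl⟩
  have hle : |epsMin d P - epsMin d Q| / 2 ≤ wassersteinDist d P Q := by
    rw [wassersteinDist]
    refine le_csInf hSne ?_
    rintro r ⟨π, hπ, rfl⟩
    linarith [main π hπ]
  linarith

end
end

section
/- Let q > 1 and let P ∈ 𝒫_1 satisfy M_q := (∫ |x|^q dP(x))^{1/q} < ∞. Then min{ P((μ_P, ∞)), P((−∞, μ_P)) } ≥ (ε_P / (4 M_q))^{q/(q−1)}. -/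
open MeasureTheory Set
open scoped ENNReal

noncomputable section

/-- The mean `μ_P` of a measure on `ℝ`. -/
def meanR (P : Measure ℝ) : ℝ := ∫ x, x ∂P

/-- `ε_P = ∫ |x − μ_P| dP` for a measure on `ℝ`. -/
def epsR (P : Measure ℝ) : ℝ := ∫ x, |x - meanR P| ∂P

/-- Membership in `𝒫₁`: Borel probability measures on `ℝ` with finite first
moment that are not a point mass. -/
def MemP1 (P : Measure ℝ) : Prop :=
  IsProbabilityMeasure P ∧ Integrable (fun x : ℝ => |x|) P ∧ ∀ x : ℝ, P {x} < 1

/-- Membership in `ℱ₁`, the upper semi-continuous log-concave densities on `ℝ`. -/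
def MemF1 (f : ℝ → ℝ) : Prop :=
  UpperSemicontinuous f ∧ (∀ x, 0 ≤ f x) ∧ (∫ x, f x = 1) ∧
    ∀ x y t : ℝ, 0 ≤ t → t ≤ 1 → f x ^ (1 - t) * f y ^ t ≤ f ((1 - t) * x + t * y)

/-- The integral `∫ log f dP`, valued in `[−∞,∞]`. -/
def eLogInt1 (P : Measure ℝ) (f : ℝ → ℝ) : EReal :=
  ((∫⁻ x, logPosPart (f x) ∂P : ℝ≥0∞) : EReal) - ((∫⁻ x, logNegPart (f x) ∂P : ℝ≥0∞) : EReal)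

/-- `f` is a log-concave projection of `P` (on `ℝ`). -/
def IsLCP1 (P : Measure ℝ) (f : ℝ → ℝ) : Prop :=
  MemF1 f ∧ ∀ g : ℝ → ℝ, MemF1 g → eLogInt1 P g ≤ eLogInt1 P f

/-- Squared Hellinger distance between densities on `ℝ`. -/
def dH2R (f g : ℝ → ℝ) : ℝ := ∫ x, (Real.sqrt (f x) - Real.sqrt (g x)) ^ 2

/-- The CDF-type discrepancy `Δ_CDF(P,Q)`. -/
def DeltaCDF (P Q : Measure ℝ) : ℝ :=
  max (⨆ t : ℝ, |Real.sqrt (P (Set.Ioi t)).toReal - Real.sqrt (Q (Set.Ioi t)).toReal|)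
      (⨆ t : ℝ, |Real.sqrt (P (Set.Iio t)).toReal - Real.sqrt (Q (Set.Iio t)).toReal|)

private lemma key_arith (q : ℝ) (hq : 1 < q) (M ε p : ℝ) (hM : 0 < M) (hε : 0 ≤ ε)
    (hp0 : 0 ≤ p) (hp1 : p ≤ 1) (h : ε / 2 ≤ M * p ^ (1 - 1/q) + M * p) :
    (ε / (4 * M)) ^ (q / (q - 1)) ≤ p := by
  have hq0 : (0:ℝ) < q := lt_trans one_pos hq
  have hq1 : (0:ℝ) < q - 1 := by linarith
  have hqq : 0 < q / (q - 1) := div_pos hq0 hq1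
  have he : 0 < 1 - 1/q := by
    have : 1/q < 1 := by rw [div_lt_one hq0]; linarith
    linarith
  rcases eq_or_lt_of_le hp0 with hp | hp
  · rw [← hp] at h
    rw [Real.zero_rpow (ne_of_gt he)] at h
    have hε0 : ε = 0 := le_antisymm (by nlinarith) hε
    rw [hε0, zero_div, Real.zero_rpow (ne_of_gt hqq), ← hp]
  · have h2 : p ≤ p ^ (1 - 1/q) := by
      calc p = p ^ (1:ℝ) := (Real.rpow_one p).symm
        _ ≤ p ^ (1 - 1/q) := Real.rpow_le_rpow_of_exponent_ge hp hp1 (by linarith [one_div_nonneg.2 hq0.le])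
    have h3 : ε / (4*M) ≤ p ^ (1 - 1/q) := by
      rw [div_le_iff₀ (by positivity)]
      nlinarith
    have h4 := Real.rpow_le_rpow (div_nonneg hε (by positivity)) h3 hqq.le
    calc (ε/(4*M)) ^ (q/(q-1)) ≤ (p ^ (1-1/q)) ^ (q/(q-1)) := h4
      _ = p ^ ((1-1/q) * (q/(q-1))) := (Real.rpow_mul hp0 _ _).symm
      _ = p ^ (1:ℝ) := by congr 1; field_simp
      _ = p := Real.rpow_one p


/-- lower bound on the mass above and below the mean. -/
theorem stmt14 (q : ℝ) (hq : 1 < q) (P : Measure ℝ) (hP : MemP1 P)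
    (hint : Integrable (fun x : ℝ => |x| ^ q) P) :
    (epsR P / (4 * (∫ x, |x| ^ q ∂P) ^ (1 / q))) ^ (q / (q - 1)) ≤
      min (P (Set.Ioi (meanR P))).toReal (P (Set.Iio (meanR P))).toReal := by
  obtain ⟨hprob, habs, hpoint⟩ := hP
  haveI := hprob
  have hq0 : (0:ℝ) < q := lt_trans one_pos hq
  have hq1 : (0:ℝ) < q - 1 := by linarith
  have hx_int : Integrable (fun x : ℝ => x) P :=
    (integrable_norm_iff aestronglyMeasurable_id).1 (by simpa [Real.norm_eq_abs] using habs)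
  set m := meanR P with hm
  have hsub : Integrable (fun x => x - m) P := hx_int.sub (integrable_const m)
  have habs_sub : Integrable (fun x => |x - m|) P := hsub.abs
  have heps_nn : 0 ≤ epsR P := integral_nonneg fun x => abs_nonneg _
  -- positivity of ∫ |x|^q
  have hIq_nn : 0 ≤ ∫ x, |x| ^ q ∂P :=
    integral_nonneg fun x => Real.rpow_nonneg (abs_nonneg x) q
  have hIq_pos : 0 < ∫ x, |x| ^ q ∂P := by
    rcases hIq_nn.lt_or_eq with h | h
    · exact h
    · exfalso
      have hz := (integral_eq_zero_iff_of_nonneg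
        (fun x => Real.rpow_nonneg (abs_nonneg x) q) hint).1 h.symm
      have h0 : ∀ᵐ x ∂P, x = (0:ℝ) := by
        filter_upwards [hz] with x hx
        have hx' : |x| ^ q = 0 := hx
        have := (Real.rpow_eq_zero (abs_nonneg x) (ne_of_gt hq0)).1 hx'
        exact abs_eq_zero.1 this
      have hcompl : P ({(0:ℝ)} : Set ℝ)ᶜ = 0 := by
        have h2 := ae_iff.1 h0
        have he : ({(0:ℝ)} : Set ℝ)ᶜ = {x : ℝ | ¬ x = 0} := by ext x; simp
        rw [he]; exact h2
      have h1 : P {(0:ℝ)} = 1 := (prob_compl_eq_zero_iff (measurableSet_singleton 0)).1 hcompl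
      exact (hpoint 0).ne h1
  set M : ℝ := (∫ x, |x| ^ q ∂P) ^ (1/q) with hMdef
  have hMpos : 0 < M := Real.rpow_pos_of_pos hIq_pos _
  -- Hölder
  have hconj : q.HolderConjugate (q / (q - 1)) := Real.HolderConjugate.conjExponent hq
  have hmemq : MemLp (fun x : ℝ => |x|) (ENNReal.ofReal q) P := by
    have hne : ENNReal.ofReal q ≠ 0 := by
      simp only [ne_eq, ENNReal.ofReal_eq_zero, not_le]; exact hq0
    have h1 : MemLp (fun x : ℝ => ‖x‖ ^ (ENNReal.ofReal q).toReal)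
        (ENNReal.ofReal q / ENNReal.ofReal q) P := by
      rw [ENNReal.div_self hne ENNReal.ofReal_ne_top, memLp_one_iff_integrable]
      have : (fun x : ℝ => ‖x‖ ^ (ENNReal.ofReal q).toReal) = fun x : ℝ => |x| ^ q := by
        funext x; rw [Real.norm_eq_abs, ENNReal.toReal_ofReal hq0.le]
      rw [this]; exact hint
    have h2 := (memLp_norm_rpow_iff (p := ENNReal.ofReal q)
      (aestronglyMeasurable_id) hne ENNReal.ofReal_ne_top).1 h1
    simpa [Real.norm_eq_abs] using h2.norm
  have hHolder : ∀ A : Set ℝ, MeasurableSet A →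
      ∫ x in A, |x| ∂P ≤ M * (P A).toReal ^ (1 - 1/q) := by
    intro A hA
    have hind_mem : MemLp (A.indicator fun _ => (1:ℝ)) (ENNReal.ofReal (q/(q-1))) P :=
      memLp_indicator_const _ hA 1 (Or.inr (measure_ne_top P A))
    have h := integral_mul_le_Lp_mul_Lq_of_nonneg hconj
        (Filter.Eventually.of_forall fun x => abs_nonneg x)
        (Filter.Eventually.of_forall fun x =>
          Set.indicator_nonneg (fun _ _ => zero_le_one) x)
        hmemq hind_mem
    have e1 : ∫ x, |x| * A.indicator (fun _ => (1:ℝ)) x ∂P = ∫ x in A, |x| ∂P := by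
      rw [← integral_indicator hA]
      congr 1; funext x; by_cases hx : x ∈ A <;> simp [hx]
    have e2 : ∫ x, A.indicator (fun _ => (1:ℝ)) x ^ (q/(q-1)) ∂P = (P A).toReal := by
      have hfe : (fun x => A.indicator (fun _ => (1:ℝ)) x ^ (q/(q-1)))
          = A.indicator fun _ => (1:ℝ) := by
        funext x; by_cases hx : x ∈ A <;>
          simp [hx, Real.one_rpow, Real.zero_rpow (ne_of_gt (div_pos hq0 hq1))]
      rw [hfe, integral_indicator hA, setIntegral_const, smul_eq_mul, mul_one, measureReal_def]
    have e3 : 1 / (q/(q-1)) = 1 - 1/q := by field_simp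
    rw [e1, e2, e3] at h
    exact h
  have hint_abs : ∫ x, |x| ∂P ≤ M := by
    have := hHolder Set.univ MeasurableSet.univ
    simpa [measure_univ] using this
  have hm_le : |m| ≤ M := by
    have h1 : |m| ≤ ∫ x, |x| ∂P := by
      have := norm_integral_le_integral_norm (μ := P) (fun x : ℝ => x)
      simpa [Real.norm_eq_abs, hm, meanR] using this
    linarith
  -- splitting at the mean
  have hms : ∫ x, (x - m) ∂P = 0 := by
    rw [integral_sub hx_int (integrable_const m), integral_const]
    simp [hm, meanR]
  have hsingle : ∀ f : ℝ → ℝ, Integrable f P → f m = 0 →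
      ∫ x in Iic m, f x ∂P = ∫ x in Iio m, f x ∂P := by
    intro f hfi hfm
    rw [← Set.Iio_union_right,
      setIntegral_union (by simp) (measurableSet_singleton m) hfi.integrableOn hfi.integrableOn,
      integral_singleton, hfm, smul_zero, add_zero]
  have hsplit_g : ∫ x in Iic m, (x - m) ∂P + ∫ x in Ioi m, (x - m) ∂P = 0 := by
    rw [intervalIntegral.integral_Iic_add_Ioi hsub.integrableOn hsub.integrableOn, hms]
  have hsplit_abs : ∫ x in Iic m, |x - m| ∂P + ∫ x in Ioi m, |x - m| ∂P = epsR P := by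
    rw [intervalIntegral.integral_Iic_add_Ioi habs_sub.integrableOn habs_sub.integrableOn]
    simp [epsR, hm]
  have hIic_abs_eq : ∫ x in Iic m, |x - m| ∂P = ∫ x in Iio m, |x - m| ∂P :=
    hsingle _ habs_sub (by simp)
  have hIic_g_eq : ∫ x in Iic m, (x - m) ∂P = ∫ x in Iio m, (x - m) ∂P :=
    hsingle _ hsub (by simp)
  have hIoi_eq : ∫ x in Ioi m, |x - m| ∂P = ∫ x in Ioi m, (x - m) ∂P :=
    setIntegral_congr_fun measurableSet_Ioi fun x hx => abs_of_pos (by simpa using sub_pos.2 (mem_Ioi.1 hx))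
  have hIio_eq : ∫ x in Iio m, |x - m| ∂P = - ∫ x in Iio m, (x - m) ∂P := by
    rw [← integral_neg]
    exact setIntegral_congr_fun measurableSet_Iio fun x hx => abs_of_neg (sub_neg.2 hx)
  have hI : ∫ x in Ioi m, (x - m) ∂P = epsR P / 2 := by
    rw [hIic_abs_eq, hIio_eq, hIoi_eq] at hsplit_abs
    rw [hIic_g_eq] at hsplit_g
    linarith
  have hJ : ∫ x in Iio m, (m - x) ∂P = epsR P / 2 := by
    have hneg : ∫ x in Iio m, (m - x) ∂P = - ∫ x in Iio m, (x - m) ∂P := by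
      rw [← integral_neg]; congr 1; funext x; ring
    rw [hIic_abs_eq, hIio_eq, hIoi_eq] at hsplit_abs
    rw [hIic_g_eq] at hsplit_g
    linarith
  have haddA : Integrable (fun x : ℝ => |x| + |m|) P := by exact habs.add (integrable_const _)
  -- common upper bound
  have hcommon : ∀ A : Set ℝ, MeasurableSet A →
      ∫ x in A, (|x| + |m|) ∂P ≤ M * (P A).toReal ^ (1 - 1/q) + M * (P A).toReal := by
    intro A hA
    rw [integral_add habs.integrableOn ((integrable_const |m|).integrableOn),
      setIntegral_const, smul_eq_mul, measureReal_def]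
    have h1 := hHolder A hA
    have h3 : (P A).toReal * |m| ≤ (P A).toReal * M :=
      mul_le_mul_of_nonneg_left hm_le ENNReal.toReal_nonneg
    nlinarith [ENNReal.toReal_nonneg (a := P A)]
  have hptop : ∀ A : Set ℝ, (P A).toReal ≤ 1 := fun A => by
    simpa using ENNReal.toReal_mono ENNReal.one_ne_top prob_le_one
  have hupper : epsR P / 2 ≤ M * (P (Ioi m)).toReal ^ (1 - 1/q) + M * (P (Ioi m)).toReal := by
    rw [← hI]
    refine le_trans (setIntegral_mono_on hsub.integrableOn
      haddA.integrableOn measurableSet_Ioi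
      fun x _ => ?_) (hcommon _ measurableSet_Ioi)
    have h1 : x - m ≤ |x - m| := le_abs_self _
    have h2 : |x - m| ≤ |x| + |m| := abs_sub x m
    linarith
  have hlower : epsR P / 2 ≤ M * (P (Iio m)).toReal ^ (1 - 1/q) + M * (P (Iio m)).toReal := by
    rw [← hJ]
    refine le_trans (setIntegral_mono_on ((integrable_const m).sub hx_int).integrableOn
      haddA.integrableOn measurableSet_Iio
      fun x _ => ?_) (hcommon _ measurableSet_Iio)
    have h1 : m - x ≤ |m - x| := le_abs_self _
    have h2 : |m - x| ≤ |m| + |x| := abs_sub m x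
    linarith
  exact le_min
    (key_arith q hq M (epsR P) _ hMpos heps_nn ENNReal.toReal_nonneg (hptop _) hupper)
    (key_arith q hq M (epsR P) _ hMpos heps_nn ENNReal.toReal_nonneg (hptop _) hlower)


end
end

section
/- Let φ ∈ Φ_d and L > 0. Then there exists a Borel measurable map Y : ℝ^d → ℝ^d such that for every x ∈ ℝ^d, φ(Y(x)) − L‖x − Y(x)‖ = sup_{y ∈ ℝ^d} (φ(y) − L‖x − y‖); in particular, for every x the supremum is attained. -/
open MeasureTheory
open scoped ENNReal

noncomputable section

/-- Membership in `Φ_d`: functions `φ : ℝ^d → [−∞,∞)` that are proper, concave,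
upper semi-continuous, and tend to `−∞` at infinity. -/
def MemPhi (d : ℕ) (φ : Euc d → EReal) : Prop :=
  (∀ x, φ x ≠ ⊤) ∧ (∃ x, φ x ≠ ⊥) ∧ UpperSemicontinuous φ ∧
    Filter.Tendsto φ (Filter.cocompact (Euc d)) (nhds ⊥) ∧
    ∀ x y : Euc d, ∀ t : ℝ, 0 ≤ t → t ≤ 1 →
      ((1 - t : ℝ) : EReal) * φ x + ((t : ℝ) : EReal) * φ y ≤ φ ((1 - t) • x + t • y)

open Filter Topology Set

namespace S16

variable {d : ℕ}

/-- The penalized objective. -/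
def obj (φ : Euc d → EReal) (L ε : ℝ) (x y : Euc d) : EReal :=
  φ y + ((-(L * ‖x - y‖) - ε * ‖y‖ ^ 2 : ℝ) : EReal)

lemma obj_le_phi {φ : Euc d → EReal} {L ε : ℝ} (hL : 0 ≤ L) (hε : 0 ≤ ε) (x y : Euc d) :
    obj φ L ε x y ≤ φ y := by
  have h1 : (0:ℝ) ≤ L * ‖x - y‖ := by positivity
  have h2 : (0:ℝ) ≤ ε * ‖y‖ ^ 2 := by positivity
  have h : (-(L * ‖x - y‖) - ε * ‖y‖ ^ 2 : ℝ) ≤ 0 := by linarith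
  calc obj φ L ε x y ≤ φ y + ((0 : ℝ) : EReal) :=
        add_le_add_right (EReal.coe_le_coe_iff.2 h) _
    _ = φ y := by simp

lemma obj_coe {φ : Euc d → EReal} {L ε : ℝ} {x y : Euc d} {a : ℝ} (h : φ y = (a : EReal)) :
    obj φ L ε x y = ((a + (-(L * ‖x - y‖) - ε * ‖y‖ ^ 2) : ℝ) : EReal) := by
  rw [obj, h, ← EReal.coe_add]

lemma obj_bot {φ : Euc d → EReal} {L ε : ℝ} {x y : Euc d} (h : φ y = ⊥) :
    obj φ L ε x y = ⊥ := by
  rw [obj, h]; rfl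

lemma obj_ne_top {φ : Euc d → EReal} (hTop : ∀ x, φ x ≠ ⊤) {L ε : ℝ} (x y : Euc d) :
    obj φ L ε x y ≠ ⊤ := by
  rcases eq_or_ne (φ y) ⊥ with h | h
  · rw [obj_bot h]; exact bot_ne_top
  · rw [obj_coe ((φ y).coe_toReal (hTop y) h).symm]; exact EReal.coe_ne_top _

lemma phi_ne_bot_of_obj_ne_bot {φ : Euc d → EReal} {L ε : ℝ} {x y : Euc d}
    (h : obj φ L ε x y ≠ ⊥) : φ y ≠ ⊥ := fun hy => h (obj_bot hy)

lemma obj_usc_pair {φ : Euc d → EReal} (husc : UpperSemicontinuous φ) (L ε : ℝ) :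
    UpperSemicontinuous (fun p : Euc d × Euc d => obj φ L ε p.1 p.2) := by
  have h1 : UpperSemicontinuous (fun p : Euc d × Euc d => φ p.2) :=
    husc.comp continuous_snd
  have hc : Continuous (fun p : Euc d × Euc d =>
      ((-(L * ‖p.1 - p.2‖) - ε * ‖p.2‖ ^ 2 : ℝ) : EReal)) := by
    apply continuous_coe_real_ereal.comp
    fun_prop
  exact h1.add' hc.upperSemicontinuous fun p =>
    EReal.continuousAt_add (Or.inr (EReal.coe_ne_bot _)) (Or.inr (EReal.coe_ne_top _))

lemma obj_usc {φ : Euc d → EReal} (husc : UpperSemicontinuous φ) (L ε : ℝ) (x : Euc d) :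
    UpperSemicontinuous (obj φ L ε x) :=
  (obj_usc_pair husc L ε).comp (Continuous.prodMk_right x)

lemma phi_superlevel_compact {φ : Euc d → EReal} (husc : UpperSemicontinuous φ)
    (hten : Tendsto φ (cocompact (Euc d)) (𝓝 ⊥)) (c : ℝ) :
    IsCompact {y | (c : EReal) ≤ φ y} := by
  have hmem : Iio (c : EReal) ∈ 𝓝 (⊥ : EReal) := Iio_mem_nhds (EReal.bot_lt_coe c)
  rcases mem_cocompact.mp (hten hmem) with ⟨K, hK, hsub⟩
  refine hK.of_isClosed_subset ?_ ?_
  · exact husc.isClosed_preimage c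
  · intro y hy
    by_contra hyK
    have : φ y < (c : EReal) := hsub hyK
    exact absurd this (not_lt.2 hy)

lemma obj_superlevel_compact {φ : Euc d → EReal} (husc : UpperSemicontinuous φ)
    (hten : Tendsto φ (cocompact (Euc d)) (𝓝 ⊥)) {L ε : ℝ} (hL : 0 ≤ L) (hε : 0 ≤ ε)
    (x : Euc d) (c : ℝ) : IsCompact {y | (c : EReal) ≤ obj φ L ε x y} := by
  refine (phi_superlevel_compact husc hten c).of_isClosed_subset
    ((obj_usc husc L ε x).isClosed_preimage c) ?_
  intro y hy
  exact le_trans hy (obj_le_phi hL hε x y)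

end S16

namespace S16
variable {d : ℕ}

lemma obj_ne_bot {φ : Euc d → EReal} {L ε : ℝ} {x y : Euc d} (h : φ y ≠ ⊥) :
    obj φ L ε x y ≠ ⊥ := by
  rw [obj, Ne, EReal.add_eq_bot_iff]
  push_neg
  exact ⟨h, EReal.coe_ne_bot _⟩

/-- Existence of a maximizer of the penalized objective. -/
lemma exists_max {φ : Euc d → EReal} (husc : UpperSemicontinuous φ)
    (hten : Tendsto φ (cocompact (Euc d)) (𝓝 ⊥)) {x₀ : Euc d} (hx₀ : φ x₀ ≠ ⊥)
    {L ε : ℝ} (hL : 0 ≤ L) (hε : 0 ≤ ε) (x : Euc d) :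
    ∃ m, ∀ y, obj φ L ε x y ≤ obj φ L ε x m := by
  set G := obj φ L ε x with hG
  have hG0 : G x₀ ≠ ⊥ := obj_ne_bot hx₀
  by_cases htop : ∃ m, G m = ⊤
  · rcases htop with ⟨m, hm⟩
    exact ⟨m, fun y => hm ▸ le_top⟩
  push_neg at htop
  have huscG : UpperSemicontinuous G := obj_usc husc L ε x
  set ι := {y : Euc d // G x₀ ≤ G y} with hι
  have : Nonempty ι := ⟨⟨x₀, le_refl _⟩⟩
  set t : ι → Set (Euc d) := fun i => {z | G i.1 ≤ G z} with ht
  have htd : Directed (· ⊇ ·) t := by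
    intro i j
    rcases le_total (G i.1) (G j.1) with h | h
    · exact ⟨j, fun z hz => le_trans h hz, fun z hz => hz⟩
    · exact ⟨i, fun z hz => hz, fun z hz => le_trans h hz⟩
  have htn : ∀ i, (t i).Nonempty := fun i => ⟨i.1, by simp [ht]⟩
  have htcl : ∀ i, IsClosed (t i) := fun i => huscG.isClosed_preimage (G i.1)
  have htc : ∀ i, IsCompact (t i) := by
    intro i
    have hne : G i.1 ≠ ⊥ := fun h => hG0 (le_bot_iff.1 (h ▸ i.2))
    have hcoe : ((G i.1).toReal : EReal) = G i.1 := (G i.1).coe_toReal (htop i.1) hne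
    have heq : t i = {z | ((G i.1).toReal : EReal) ≤ G z} := by
      simp only [ht, hcoe]
    rw [heq]
    exact obj_superlevel_compact husc hten hL hε x _
  obtain ⟨m, hm⟩ :=
    IsCompact.nonempty_iInter_of_directed_nonempty_isCompact_isClosed t htd htn htc htcl
  simp only [Set.mem_iInter] at hm
  refine ⟨m, fun y => ?_⟩
  rcases le_total (G y) (G x₀) with h | h
  · exact le_trans h (hm ⟨x₀, le_refl _⟩)
  · exact hm ⟨y, h⟩

end S16

namespace S16
variable {d : ℕ}

lemma midpoint_concave {φ : Euc d → EReal}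
    (hconc : ∀ x y : Euc d, ∀ t : ℝ, 0 ≤ t → t ≤ 1 →
      ((1 - t : ℝ) : EReal) * φ x + ((t : ℝ) : EReal) * φ y ≤ φ ((1 - t) • x + t • y))
    {y z : Euc d} {a b : ℝ} (hy : φ y = (a : EReal)) (hz : φ z = (b : EReal)) :
    (((a + b) / 2 : ℝ) : EReal) ≤ φ ((2⁻¹ : ℝ) • (y + z)) := by
  have h := hconc y z (1/2) (by norm_num) (by norm_num)
  rw [hy, hz] at h
  have hpt : (1 - (1/2 : ℝ)) • y + ((1/2 : ℝ)) • z = (2⁻¹ : ℝ) • (y + z) := by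
    rw [smul_add]; norm_num
  rw [hpt] at h
  refine le_trans (le_of_eq ?_) h
  rw [← EReal.coe_mul, ← EReal.coe_mul, ← EReal.coe_add, EReal.coe_eq_coe_iff]
  ring

lemma norm_mid_le {x y z : Euc d} :
    ‖x - (2⁻¹ : ℝ) • (y + z)‖ ≤ (‖x - y‖ + ‖x - z‖) / 2 := by
  have h : x - (2⁻¹ : ℝ) • (y + z) = (2⁻¹ : ℝ) • ((x - y) + (x - z)) := by
    module
  rw [h, norm_smul]
  have := norm_add_le (x - y) (x - z)
  rw [Real.norm_eq_abs]
  rw [abs_of_pos (by norm_num : (0:ℝ) < 2⁻¹)]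
  linarith

lemma normsq_mid {y z : Euc d} :
    ‖(2⁻¹ : ℝ) • (y + z)‖ ^ 2 = (‖y‖ ^ 2 + ‖z‖ ^ 2) / 2 - ‖y - z‖ ^ 2 / 4 := by
  have hp := parallelogram_law_with_norm ℝ y z
  have hn : ‖(2⁻¹ : ℝ) • (y + z)‖ = 2⁻¹ * ‖y + z‖ := by
    rw [norm_smul, Real.norm_eq_abs, abs_of_pos (by norm_num : (0:ℝ) < 2⁻¹)]
  rw [hn]
  nlinarith [hp, norm_nonneg (y+z), norm_nonneg (y-z)]

/-- Uniqueness of the maximizer when `ε > 0`. -/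
lemma max_unique {φ : Euc d → EReal} (hTop : ∀ x, φ x ≠ ⊤)
    (hconc : ∀ x y : Euc d, ∀ t : ℝ, 0 ≤ t → t ≤ 1 →
      ((1 - t : ℝ) : EReal) * φ x + ((t : ℝ) : EReal) * φ y ≤ φ ((1 - t) • x + t • y))
    {L ε : ℝ} (hL : 0 ≤ L) (hε : 0 < ε) {x m m' : Euc d}
    (hm : ∀ y, obj φ L ε x y ≤ obj φ L ε x m)
    (hm' : ∀ y, obj φ L ε x y ≤ obj φ L ε x m')
    (hmb : φ m ≠ ⊥) (hm'b : φ m' ≠ ⊥) : m = m' := by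
  by_contra hne
  set a := (φ m).toReal with ha'
  set b := (φ m').toReal with hb'
  have ha : φ m = (a : EReal) := ((φ m).coe_toReal (hTop m) hmb).symm
  have hb : φ m' = (b : EReal) := ((φ m').coe_toReal (hTop m') hm'b).symm
  have hvv : obj φ L ε x m = obj φ L ε x m' := le_antisymm (hm' m) (hm m')
  rw [obj_coe ha, obj_coe hb, EReal.coe_eq_coe_iff] at hvv
  set mid := (2⁻¹ : ℝ) • (m + m') with hmid
  have hφmid : (((a + b) / 2 : ℝ) : EReal) ≤ φ mid := midpoint_concave hconc ha hb
  have hlow : (((a + b) / 2 + (-(L * ‖x - mid‖) - ε * ‖mid‖ ^ 2) : ℝ) : EReal)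
      ≤ obj φ L ε x mid := by
    rw [EReal.coe_add, obj]
    exact add_le_add_left hφmid _
  have hup : obj φ L ε x mid ≤ obj φ L ε x m := hm mid
  rw [obj_coe ha] at hup
  have hreal : ((a + b) / 2 + (-(L * ‖x - mid‖) - ε * ‖mid‖ ^ 2) : ℝ)
      ≤ (a + (-(L * ‖x - m‖) - ε * ‖m‖ ^ 2) : ℝ) :=
    EReal.coe_le_coe_iff.1 (le_trans hlow hup)
  have h1 : ‖x - mid‖ ≤ (‖x - m‖ + ‖x - m'‖) / 2 := norm_mid_le
  have h2 : ‖mid‖ ^ 2 = (‖m‖ ^ 2 + ‖m'‖ ^ 2) / 2 - ‖m - m'‖ ^ 2 / 4 := normsq_mid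
  have h3 : 0 < ‖m - m'‖ := norm_pos_iff.2 (sub_ne_zero.2 hne)
  have h4 : L * ‖x - mid‖ ≤ L * ((‖x - m‖ + ‖x - m'‖) / 2) :=
    mul_le_mul_of_nonneg_left h1 hL
  have h5 : ε * ‖mid‖ ^ 2 = ε * ((‖m‖ ^ 2 + ‖m'‖ ^ 2) / 2) - ε * ‖m - m'‖ ^ 2 / 4 := by
    rw [h2]; ring
  have h6 : 0 < ε * ‖m - m'‖ ^ 2 := mul_pos hε (pow_pos h3 2)
  nlinarith [hreal, hvv, h4, h5, h6]

end S16

namespace S16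
variable {d : ℕ}

lemma obj_ne_bot_of_max {φ : Euc d → EReal} {L ε : ℝ} {x x₀ m : Euc d} (hx₀ : φ x₀ ≠ ⊥)
    (hm : obj φ L ε x x₀ ≤ obj φ L ε x m) : φ m ≠ ⊥ := by
  refine phi_ne_bot_of_obj_ne_bot (x := x) (L := L) (ε := ε) ?_
  intro h
  exact (obj_ne_bot hx₀ : obj φ L ε x x₀ ≠ ⊥) (le_bot_iff.1 (h ▸ hm))

/-- Continuity of the (unique) maximizer selection when `ε > 0`. -/
lemma selection_continuous {φ : Euc d → EReal} (hTop : ∀ x, φ x ≠ ⊤)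
    (husc : UpperSemicontinuous φ)
    (hten : Tendsto φ (cocompact (Euc d)) (𝓝 ⊥))
    (hconc : ∀ x y : Euc d, ∀ t : ℝ, 0 ≤ t → t ≤ 1 →
      ((1 - t : ℝ) : EReal) * φ x + ((t : ℝ) : EReal) * φ y ≤ φ ((1 - t) • x + t • y))
    {x₀ : Euc d} (hx₀ : φ x₀ ≠ ⊥) {L ε : ℝ} (hL : 0 ≤ L) (hε : 0 < ε)
    {Yε : Euc d → Euc d} (hY : ∀ x y, obj φ L ε x y ≤ obj φ L ε x (Yε x)) :
    Continuous Yε := by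
  refine continuous_iff_seqContinuous.2 ?_
  intro u x hu
  set a₀ := (φ x₀).toReal with ha₀'
  have ha₀ : φ x₀ = (a₀ : EReal) := ((φ x₀).coe_toReal (hTop x₀) hx₀).symm
  -- a uniform bound on the distances ‖u k - x₀‖
  have htd : Tendsto (fun k => ‖u k - x₀‖) atTop (𝓝 ‖x - x₀‖) :=
    (hu.sub tendsto_const_nhds).norm
  obtain ⟨R, hR⟩ : ∃ R, ∀ k, ‖u k - x₀‖ ≤ R := by
    obtain ⟨R, hR⟩ := htd.bddAbove_range
    exact ⟨R, fun k => hR ⟨k, rfl⟩⟩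
  set c : ℝ := a₀ - L * R - ε * ‖x₀‖ ^ 2 with hc'
  have hc : ∀ k, (c : EReal) ≤ φ (Yε (u k)) := by
    intro k
    have h1 : (c : ℝ) ≤ a₀ + (-(L * ‖u k - x₀‖) - ε * ‖x₀‖ ^ 2) := by
      have := mul_le_mul_of_nonneg_left (hR k) hL
      simp only [hc']; linarith
    calc (c : EReal) ≤ ((a₀ + (-(L * ‖u k - x₀‖) - ε * ‖x₀‖ ^ 2) : ℝ) : EReal) :=
          EReal.coe_le_coe_iff.2 h1
      _ = obj φ L ε (u k) x₀ := (obj_coe ha₀).symm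
      _ ≤ obj φ L ε (u k) (Yε (u k)) := hY _ _
      _ ≤ φ (Yε (u k)) := obj_le_phi hL hε.le _ _
  have hK : IsCompact {y | (c : EReal) ≤ φ y} := phi_superlevel_compact husc hten c
  apply Filter.tendsto_of_subseq_tendsto
  intro ns hns
  obtain ⟨y, _, ms, hms, hconv⟩ :=
    hK.tendsto_subseq (x := fun j => Yε (u (ns j))) (fun j => hc (ns j))
  have hxj : Tendsto (fun j => u (ns (ms j))) atTop (𝓝 x) :=
    hu.comp (hns.comp hms.tendsto_atTop)
  -- y is a maximizer of `obj φ L ε x`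
  have hymax : ∀ z, obj φ L ε x z ≤ obj φ L ε x y := by
    intro z
    rcases eq_or_ne (φ z) ⊥ with hz | hz
    · rw [obj_bot hz]; exact bot_le
    have hzc : φ z = (((φ z).toReal : ℝ) : EReal) := ((φ z).coe_toReal (hTop z) hz).symm
    set b := (φ z).toReal with hb'
    by_contra hlt
    push_neg at hlt
    rw [obj_coe hzc] at hlt
    obtain ⟨c', hc1, hc2⟩ := EReal.exists_between_coe_real hlt
    have hev1 : ∀ᶠ p in 𝓝 (x, y), obj φ L ε p.1 p.2 < (c' : EReal) :=
      (obj_usc_pair husc L ε) (x, y) _ hc1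
    have hpair : Tendsto (fun j => (u (ns (ms j)), Yε (u (ns (ms j))))) atTop (𝓝 (x, y)) :=
      hxj.prodMk_nhds hconv
    have hev1' := hpair.eventually hev1
    have hlow : Tendsto (fun j => (b + (-(L * ‖u (ns (ms j)) - z‖) - ε * ‖z‖ ^ 2) : ℝ))
        atTop (𝓝 (b + (-(L * ‖x - z‖) - ε * ‖z‖ ^ 2))) := by
      have hn : Tendsto (fun j => ‖u (ns (ms j)) - z‖) atTop (𝓝 ‖x - z‖) :=
        (hxj.sub tendsto_const_nhds).norm
      exact tendsto_const_nhds.add (((hn.const_mul L).neg).sub tendsto_const_nhds)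
    have hev2 : ∀ᶠ j in atTop, c' < b + (-(L * ‖u (ns (ms j)) - z‖) - ε * ‖z‖ ^ 2) :=
      hlow.eventually (eventually_gt_nhds (EReal.coe_lt_coe_iff.1 hc2))
    obtain ⟨j, hj1, hj2⟩ := (hev1'.and hev2).exists
    have hle : ((b + (-(L * ‖u (ns (ms j)) - z‖) - ε * ‖z‖ ^ 2) : ℝ) : EReal)
        ≤ obj φ L ε (u (ns (ms j))) (Yε (u (ns (ms j)))) := by
      rw [← obj_coe hzc]
      exact hY _ _
    have : ((c' : ℝ) : EReal) < (c' : EReal) :=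
      lt_of_le_of_lt (le_trans (EReal.coe_le_coe_iff.2 hj2.le) hle) hj1
    exact absurd this (lt_irrefl _)
  have hyb : φ y ≠ ⊥ := obj_ne_bot_of_max hx₀ (hymax x₀)
  have hYxb : φ (Yε x) ≠ ⊥ := obj_ne_bot_of_max hx₀ (hY x x₀)
  have hyx : y = Yε x := max_unique hTop hconc hL hε hymax (hY x) hyb hYxb
  exact ⟨ms, hyx ▸ hconv⟩

end S16

namespace S16
variable {d : ℕ}

lemma obj_mono_eps {φ : Euc d → EReal} {L ε ε' : ℝ} (h : ε ≤ ε') (x y : Euc d) :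
    obj φ L ε' x y ≤ obj φ L ε x y := by
  have h2 : ε * ‖y‖ ^ 2 ≤ ε' * ‖y‖ ^ 2 := mul_le_mul_of_nonneg_right h (sq_nonneg _)
  exact add_le_add_right (EReal.coe_le_coe_iff.2 (by linarith)) _

lemma norm_le_of_sq_le {a b : ℝ} (ha : 0 ≤ a) (hb : 0 ≤ b) (h : a ^ 2 ≤ b ^ 2) : a ≤ b := by
  nlinarith [sq_nonneg (a - b), sq_nonneg (a + b)]

/-- Pointwise convergence of the penalized maximizers to a maximizer of the
unpenalized objective. -/
lemma tendsto_min_norm {φ : Euc d → EReal} (hTop : ∀ x, φ x ≠ ⊤)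
    (husc : UpperSemicontinuous φ)
    (hten : Tendsto φ (cocompact (Euc d)) (𝓝 ⊥))
    (hconc : ∀ x y : Euc d, ∀ t : ℝ, 0 ≤ t → t ≤ 1 →
      ((1 - t : ℝ) : EReal) * φ x + ((t : ℝ) : EReal) * φ y ≤ φ ((1 - t) • x + t • y))
    {x₀ : Euc d} (hx₀ : φ x₀ ≠ ⊥) {L : ℝ} (hL : 0 ≤ L)
    {Yn : ℕ → Euc d → Euc d}
    (hYn : ∀ (n : ℕ) (x y : Euc d),
      obj φ L (1 / ((n : ℝ) + 1)) x y ≤ obj φ L (1 / ((n : ℝ) + 1)) x (Yn n x))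
    (x : Euc d) :
    ∃ w, Tendsto (fun n => Yn n x) atTop (𝓝 w) ∧ ∀ z, obj φ L 0 x z ≤ obj φ L 0 x w := by
  set ε : ℕ → ℝ := fun n => 1 / ((n : ℝ) + 1) with hε'
  have hεpos : ∀ n, 0 < ε n := fun n => by positivity
  have hεle1 : ∀ n, ε n ≤ 1 := by
    intro n
    rw [hε']
    rw [div_le_one (by positivity)]
    simp
  -- the unpenalized maximum and its min-norm maximizer
  obtain ⟨m0, hm0⟩ := exists_max husc hten hx₀ hL le_rfl x
  have hm0b : φ m0 ≠ ⊥ := obj_ne_bot_of_max hx₀ (hm0 x₀)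
  have hvb : obj φ L 0 x m0 ≠ ⊥ := obj_ne_bot hm0b
  have hvt : obj φ L 0 x m0 ≠ ⊤ := obj_ne_top hTop x m0
  set vr := (obj φ L 0 x m0).toReal with hvr'
  have hv : obj φ L 0 x m0 = (vr : EReal) := ((obj φ L 0 x m0).coe_toReal hvt hvb).symm
  set M : Set (Euc d) := {z | (vr : EReal) ≤ obj φ L 0 x z} with hM'
  have hMmax : ∀ z, z ∈ M ↔ ∀ w, obj φ L 0 x w ≤ obj φ L 0 x z := by
    intro z
    constructor
    · intro hz w
      exact le_trans (le_trans (hm0 w) hv.le) hz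
    · intro hz
      exact le_trans hv.ge (hz m0)
  have hMc : IsCompact M := obj_superlevel_compact husc hten hL le_rfl x vr
  have hMne : M.Nonempty := ⟨m0, hv.ge⟩
  obtain ⟨w, hwM, hwmin⟩ := hMc.exists_isMinOn hMne (continuous_norm.continuousOn)
  rw [isMinOn_iff] at hwmin
  have hwmax : ∀ z, obj φ L 0 x z ≤ obj φ L 0 x w := (hMmax w).1 hwM
  have hwb : φ w ≠ ⊥ := obj_ne_bot_of_max hx₀ (hwmax x₀)
  set aw := (φ w).toReal with haw'
  have haw : φ w = (aw : EReal) := ((φ w).coe_toReal (hTop w) hwb).symm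
  refine ⟨w, ?_, hwmax⟩
  -- uniform compact containing all Yn n x
  set a₀ := (φ x₀).toReal with ha₀'
  have ha₀ : φ x₀ = (a₀ : EReal) := ((φ x₀).coe_toReal (hTop x₀) hx₀).symm
  set c : ℝ := a₀ - L * ‖x - x₀‖ - ‖x₀‖ ^ 2 with hc'
  have hc : ∀ n, (c : EReal) ≤ φ (Yn n x) := by
    intro n
    have h1 : (c : ℝ) ≤ a₀ + (-(L * ‖x - x₀‖) - ε n * ‖x₀‖ ^ 2) := by
      have h2 : ε n * ‖x₀‖ ^ 2 ≤ 1 * ‖x₀‖ ^ 2 :=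
        mul_le_mul_of_nonneg_right (hεle1 n) (sq_nonneg _)
      simp only [hc']; linarith
    calc (c : EReal) ≤ ((a₀ + (-(L * ‖x - x₀‖) - ε n * ‖x₀‖ ^ 2) : ℝ) : EReal) :=
          EReal.coe_le_coe_iff.2 h1
      _ = obj φ L (ε n) x x₀ := (obj_coe ha₀).symm
      _ ≤ obj φ L (ε n) x (Yn n x) := hYn n x x₀
      _ ≤ φ (Yn n x) := obj_le_phi hL (hεpos n).le _ _
  have hK : IsCompact {y | (c : EReal) ≤ φ y} := phi_superlevel_compact husc hten c
  apply Filter.tendsto_of_subseq_tendsto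
  intro ns hns
  obtain ⟨y, _, ms, hms, hconv⟩ :=
    hK.tendsto_subseq (x := fun j => Yn (ns j) x) (fun j => hc (ns j))
  have hjat : Tendsto (fun j => ns (ms j)) atTop atTop := hns.comp hms.tendsto_atTop
  have hεj : Tendsto (fun j => ε (ns (ms j))) atTop (𝓝 0) :=
    tendsto_one_div_add_atTop_nhds_zero_nat.comp hjat
  have hjb : ∀ j, φ (Yn (ns (ms j)) x) ≠ ⊥ :=
    fun j => obj_ne_bot_of_max hx₀ (hYn (ns (ms j)) x x₀)
  -- y is a maximizer of `obj φ L 0 x`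
  have hymax : ∀ z, obj φ L 0 x z ≤ obj φ L 0 x y := by
    intro z
    rcases eq_or_ne (φ z) ⊥ with hz | hz
    · rw [obj_bot hz]; exact bot_le
    have hzc : φ z = (((φ z).toReal : ℝ) : EReal) := ((φ z).coe_toReal (hTop z) hz).symm
    set b := (φ z).toReal with hb'
    by_contra hlt
    push_neg at hlt
    rw [obj_coe hzc] at hlt
    obtain ⟨c', hc1, hc2⟩ := EReal.exists_between_coe_real hlt
    have hev1 : ∀ᶠ v in 𝓝 y, obj φ L 0 x v < (c' : EReal) :=
      (obj_usc husc L 0 x) y _ hc1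
    have hev1' := hconv.eventually hev1
    have hlow : Tendsto (fun j => (b + (-(L * ‖x - z‖) - ε (ns (ms j)) * ‖z‖ ^ 2) : ℝ))
        atTop (𝓝 (b + (-(L * ‖x - z‖) - 0 * ‖z‖ ^ 2))) := by
      refine tendsto_const_nhds.add (tendsto_const_nhds.sub ?_)
      exact hεj.mul tendsto_const_nhds
    have hgt : c' < b + (-(L * ‖x - z‖) - 0 * ‖z‖ ^ 2) := by
      have := EReal.coe_lt_coe_iff.1 hc2
      linarith [this]
    have hev2 : ∀ᶠ j in atTop,
        c' < b + (-(L * ‖x - z‖) - ε (ns (ms j)) * ‖z‖ ^ 2) :=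
      hlow.eventually (eventually_gt_nhds hgt)
    obtain ⟨j, hj1, hj2⟩ := (hev1'.and hev2).exists
    have hle : ((b + (-(L * ‖x - z‖) - ε (ns (ms j)) * ‖z‖ ^ 2) : ℝ) : EReal)
        ≤ obj φ L 0 x (Yn (ns (ms j)) x) := by
      calc ((b + (-(L * ‖x - z‖) - ε (ns (ms j)) * ‖z‖ ^ 2) : ℝ) : EReal)
          = obj φ L (ε (ns (ms j))) x z := (obj_coe hzc).symm
        _ ≤ obj φ L (ε (ns (ms j))) x (Yn (ns (ms j)) x) := hYn _ x z
        _ ≤ obj φ L 0 x (Yn (ns (ms j)) x) := obj_mono_eps (hεpos _).le x _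
    have : ((c' : ℝ) : EReal) < (c' : EReal) :=
      lt_of_le_of_lt (le_trans (EReal.coe_le_coe_iff.2 hj2.le) hle) hj1
    exact absurd this (lt_irrefl _)
  -- the norms of the subsequence are bounded by ‖w‖
  have hnorm : ∀ j, ‖Yn (ns (ms j)) x‖ ≤ ‖w‖ := by
    intro j
    set p := Yn (ns (ms j)) x with hp'
    set r := (φ p).toReal with hr'
    have hr : φ p = (r : EReal) := ((φ p).coe_toReal (hTop p) (hjb j)).symm
    have h1 : obj φ L (ε (ns (ms j))) x w ≤ obj φ L (ε (ns (ms j))) x p := hYn _ x w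
    have h2 : obj φ L 0 x p ≤ obj φ L 0 x w := hwmax p
    rw [obj_coe haw, obj_coe hr, EReal.coe_le_coe_iff] at h1
    rw [obj_coe haw, obj_coe hr, EReal.coe_le_coe_iff] at h2
    have hsq : ε (ns (ms j)) * ‖p‖ ^ 2 ≤ ε (ns (ms j)) * ‖w‖ ^ 2 := by linarith
    have := (mul_le_mul_iff_right₀ (hεpos (ns (ms j)))).1 hsq
    exact norm_le_of_sq_le (norm_nonneg _) (norm_nonneg _) this
  have hyw : ‖y‖ ≤ ‖w‖ :=
    le_of_tendsto hconv.norm (Filter.Eventually.of_forall hnorm)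
  -- y = w by uniqueness of the min-norm maximizer
  have hyb : φ y ≠ ⊥ := obj_ne_bot_of_max hx₀ (hymax x₀)
  set ay := (φ y).toReal with hay'
  have hay : φ y = (ay : EReal) := ((φ y).coe_toReal (hTop y) hyb).symm
  have hyeq : y = w := by
    by_contra hne
    set mid := (2⁻¹ : ℝ) • (y + w) with hmid'
    have hφmid : (((ay + aw) / 2 : ℝ) : EReal) ≤ φ mid := midpoint_concave hconc hay haw
    have hlowmid : (((ay + aw) / 2 + (-(L * ‖x - mid‖) - 0 * ‖mid‖ ^ 2) : ℝ) : EReal)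
        ≤ obj φ L 0 x mid := by
      rw [EReal.coe_add, obj]
      exact add_le_add_left hφmid _
    -- values of the two maximizers agree (= vr)
    have hvy : obj φ L 0 x y = (vr : EReal) := by
      refine le_antisymm (le_trans (hm0 y) hv.le) ?_
      rw [← hv]; exact hymax m0
    have hvw : obj φ L 0 x w = (vr : EReal) := by
      refine le_antisymm (le_trans (hm0 w) hv.le) ?_
      rw [← hv]; exact hwmax m0
    rw [obj_coe hay, EReal.coe_eq_coe_iff] at hvy
    rw [obj_coe haw, EReal.coe_eq_coe_iff] at hvw
    -- mid is a maximizer, hence in M, hence ‖w‖ ≤ ‖mid‖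
    have hmidM : mid ∈ M := by
      have h1 : ‖x - mid‖ ≤ (‖x - y‖ + ‖x - w‖) / 2 := norm_mid_le
      have hkey : (vr : ℝ) ≤ (ay + aw) / 2 + (-(L * ‖x - mid‖) - 0 * ‖mid‖ ^ 2) := by
        have h4 : L * ‖x - mid‖ ≤ L * ((‖x - y‖ + ‖x - w‖) / 2) :=
          mul_le_mul_of_nonneg_left h1 hL
        linarith
      exact le_trans (EReal.coe_le_coe_iff.2 hkey) hlowmid
    have h5 : ‖w‖ ≤ ‖mid‖ := hwmin mid hmidM
    have h6 : ‖mid‖ ^ 2 = (‖y‖ ^ 2 + ‖w‖ ^ 2) / 2 - ‖y - w‖ ^ 2 / 4 := normsq_mid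
    have h7 : 0 < ‖y - w‖ := norm_pos_iff.2 (sub_ne_zero.2 hne)
    nlinarith [norm_nonneg w, norm_nonneg mid, norm_nonneg y]
  exact ⟨ms, hyeq ▸ hconv⟩

end S16

theorem stmt16' (d : ℕ) (φ : Euc d → EReal)
    (hφ : (∀ x, φ x ≠ ⊤) ∧ (∃ x, φ x ≠ ⊥) ∧ UpperSemicontinuous φ ∧
      Filter.Tendsto φ (Filter.cocompact (Euc d)) (nhds ⊥) ∧
      ∀ x y : Euc d, ∀ t : ℝ, 0 ≤ t → t ≤ 1 →
        ((1 - t : ℝ) : EReal) * φ x + ((t : ℝ) : EReal) * φ y ≤ φ ((1 - t) • x + t • y))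
    (L : ℝ) (hL : 0 < L) :
    ∃ Y : Euc d → Euc d, Measurable Y ∧ ∀ x : Euc d,
      φ (Y x) - ((L * ‖x - Y x‖ : ℝ) : EReal)
        = ⨆ y : Euc d, (φ y - ((L * ‖x - y‖ : ℝ) : EReal)) := by
  obtain ⟨hTop, ⟨x₀, hx₀⟩, husc, hten, hconc⟩ := hφ
  choose Yn hYn using fun (n : ℕ) (x : Euc d) =>
    S16.exists_max husc hten hx₀ (L := L) (ε := 1 / ((n : ℝ) + 1)) hL.le (by positivity) x
  have hcont : ∀ n, Continuous (Yn n) := fun n =>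
    S16.selection_continuous hTop husc hten hconc hx₀ hL.le (by positivity)
      (fun x y => hYn n x y)
  choose Y hYt hYm using fun x =>
    S16.tendsto_min_norm hTop husc hten hconc hx₀ hL.le (fun n x y => hYn n x y) x
  refine ⟨Y, ?_, ?_⟩
  · exact measurable_of_tendsto_metrizable (fun n => (hcont n).measurable)
      (tendsto_pi_nhds.2 hYt)
  · intro x
    have heq : ∀ z, φ z - ((L * ‖x - z‖ : ℝ) : EReal) = S16.obj φ L 0 x z := by
      intro z
      rw [S16.obj, sub_eq_add_neg, ← EReal.coe_neg]
      congr 1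
      rw [EReal.coe_eq_coe_iff]
      ring
    simp only [heq]
    exact le_antisymm (le_iSup (S16.obj φ L 0 x) (Y x)) (iSup_le (hYm x))

/-- a Borel measurable selection of maximizers for the Lipschitz
majorization. -/
theorem stmt16 (d : ℕ) (φ : Euc d → EReal) (hφ : MemPhi d φ) (L : ℝ) (hL : 0 < L) :
    ∃ Y : Euc d → Euc d, Measurable Y ∧ ∀ x : Euc d,
      φ (Y x) - ((L * ‖x - Y x‖ : ℝ) : EReal)
        = ⨆ y : Euc d, (φ y - ((L * ‖x - y‖ : ℝ) : EReal)) := by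
  exact stmt16' d φ hφ L hL

end
end

section
/- Let C ⊆ ℝ^d be a compact convex set with non-empty interior, and for δ > 0 let Nbd(C, δ) := {x ∈ ℝ^d : dist(x, C) ≤ δ}, where dist(x, C) := min_{y∈C} ‖x − y‖. Then the function δ ↦ Leb_d(Nbd(C, δ) \ C) / δ is non-decreasing on (0, ∞), where Leb_d denotes d-dimensional Lebesgue measure. -/
open MeasureTheory

noncomputable section

set_option linter.unusedSectionVars false
open Metric Set
open scoped InnerProductSpace ENNReal

namespace Stmt17

variable {d : ℕ} {C : Set (Euc d)}

/-- unit outward vector field associated to a projection map `p`. -/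
def uvec (p : Euc d → Euc d) (x : Euc d) : Euc d := ‖x - p x‖⁻¹ • (x - p x)

/-- push outward by `c`. -/
def ψmap (p : Euc d → Euc d) (c : ℝ) (x : Euc d) : Euc d := x + c • uvec p x

/-- pull inward by `c`. -/
def φmap (C : Set (Euc d)) (p : Euc d → Euc d) (c : ℝ) (y : Euc d) : Euc d :=
  p y + (infDist y C - c) • uvec p y

lemma uvec_norm {p : Euc d → Euc d} {x : Euc d} (hx : x - p x ≠ 0) : ‖uvec p x‖ = 1 := by
  rw [uvec, norm_smul, norm_inv, norm_norm, inv_mul_cancel₀ (norm_ne_zero_iff.mpr hx)]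

lemma smul_uvec {p : Euc d → Euc d} {x : Euc d} (hx : x - p x ≠ 0) :
    ‖x - p x‖ • uvec p x = x - p x := by
  rw [uvec, smul_inv_smul₀ (norm_ne_zero_iff.mpr hx)]





lemma proj_unique {d : ℕ} {C : Set (Euc d)} {x y y' : Euc d} (hy : y ∈ C) (hy' : y' ∈ C)
    (h : ∀ z ∈ C, ⟪x - y, z - y⟫_ℝ ≤ 0) (h' : ∀ z ∈ C, ⟪x - y', z - y'⟫_ℝ ≤ 0) :
    y = y' := by
  have a := h y' hy'
  have b := h' y hy
  have key : ‖y - y'‖ ^ 2 ≤ 0 := by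
    have e : ⟪y - y', y - y'⟫_ℝ = ⟪y - x, y - y'⟫_ℝ + ⟪x - y', y - y'⟫_ℝ := by
      rw [← inner_add_left]
      congr 1
      abel
    have e2 : ⟪y - x, y - y'⟫_ℝ = ⟪x - y, y' - y⟫_ℝ := by
      rw [show y - x = -(x - y) by abel, show y - y' = -(y' - y) by abel, inner_neg_neg]
    rw [← real_inner_self_eq_norm_sq, e, e2]
    linarith
  have h0 : y - y' = 0 := by
    have h2 := sq_nonneg ‖y - y'‖
    have h3 : ‖y - y'‖ ^ 2 = 0 := le_antisymm key h2
    rwa [pow_eq_zero_iff (by norm_num), norm_eq_zero] at h3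
  exact sub_eq_zero.mp h0

lemma ray' {d : ℕ} {C : Set (Euc d)} {p : Euc d → Euc d}
    (hpC : ∀ x, p x ∈ C) (hpd : ∀ x, ‖x - p x‖ = infDist x C)
    (hpo : ∀ x, ∀ z ∈ C, ⟪x - p x, z - p x⟫_ℝ ≤ 0)
    {x : Euc d} (hx : x - p x ≠ 0) {t : ℝ} (ht : 0 ≤ t) :
    p (p x + t • uvec p x) = p x ∧ infDist (p x + t • uvec p x) C = t := by
  have hnx : ‖x - p x‖ ≠ 0 := norm_ne_zero_iff.mpr hx
  have hun : ‖uvec p x‖ = 1 := uvec_norm hx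
  have hyp : (p x + t • uvec p x) - p x = t • uvec p x := by abel
  have hobt : ∀ z ∈ C, ⟪(p x + t • uvec p x) - p x, z - p x⟫_ℝ ≤ 0 := by
    intro z hz
    rw [hyp, uvec, real_inner_smul_left, real_inner_smul_left]
    have h1 := hpo x z hz
    have h2 : (0:ℝ) ≤ ‖x - p x‖⁻¹ := inv_nonneg.mpr (norm_nonneg _)
    exact mul_nonpos_of_nonneg_of_nonpos ht (mul_nonpos_of_nonneg_of_nonpos h2 h1)
  have hpy : p (p x + t • uvec p x) = p x :=
    proj_unique (hpC _) (hpC x) (hpo _) hobt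
  refine ⟨hpy, ?_⟩
  rw [← hpd _, hpy, hyp, norm_smul, hun, Real.norm_eq_abs, abs_of_nonneg ht, mul_one]

lemma subgrad {d : ℕ} {C : Set (Euc d)} {p : Euc d → Euc d}
    (hpC : ∀ x, p x ∈ C) (hpd : ∀ x, ‖x - p x‖ = infDist x C)
    (hpo : ∀ x, ∀ z ∈ C, ⟪x - p x, z - p x⟫_ℝ ≤ 0)
    {x : Euc d} (hx : x - p x ≠ 0) (y : Euc d) :
    ⟪uvec p x, y - x⟫_ℝ ≤ infDist y C - infDist x C := by
  have hnx : ‖x - p x‖ ≠ 0 := norm_ne_zero_iff.mpr hx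
  have hun : ‖uvec p x‖ = 1 := uvec_norm hx
  have h1 : ⟪uvec p x, y - p y⟫_ℝ ≤ infDist y C := by
    calc ⟪uvec p x, y - p y⟫_ℝ ≤ ‖uvec p x‖ * ‖y - p y‖ := real_inner_le_norm _ _
      _ = infDist y C := by rw [hun, one_mul, hpd]
  have hsplit : ⟪uvec p x, y - p y⟫_ℝ
      = ⟪uvec p x, y - x⟫_ℝ + ⟪uvec p x, x - p x⟫_ℝ + ⟪uvec p x, p x - p y⟫_ℝ := by
    rw [← inner_add_right, ← inner_add_right]
    congr 1
    abel
  have h2 : ⟪uvec p x, x - p x⟫_ℝ = infDist x C := by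
    rw [uvec, real_inner_smul_left, real_inner_self_eq_norm_sq, ← hpd x]
    field_simp
  have h3 : (0:ℝ) ≤ ⟪uvec p x, p x - p y⟫_ℝ := by
    rw [uvec, real_inner_smul_left]
    have h4 : ⟪x - p x, p y - p x⟫_ℝ ≤ 0 := hpo x (p y) (hpC y)
    have h5 : ⟪x - p x, p x - p y⟫_ℝ = -⟪x - p x, p y - p x⟫_ℝ := by
      rw [show p x - p y = -(p y - p x) by abel, inner_neg_right]
    have h6 : (0:ℝ) ≤ ‖x - p x‖⁻¹ := inv_nonneg.mpr (norm_nonneg _)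
    nlinarith
  linarith [h1, hsplit.symm.le, h2]

lemma umono {d : ℕ} {C : Set (Euc d)} {p : Euc d → Euc d}
    (hpC : ∀ x, p x ∈ C) (hpd : ∀ x, ‖x - p x‖ = infDist x C)
    (hpo : ∀ x, ∀ z ∈ C, ⟪x - p x, z - p x⟫_ℝ ≤ 0)
    {x y : Euc d} (hx : x - p x ≠ 0) (hy : y - p y ≠ 0) :
    0 ≤ ⟪uvec p x - uvec p y, x - y⟫_ℝ := by
  have h1 := subgrad hpC hpd hpo hx y
  have h2 := subgrad hpC hpd hpo hy x
  rw [inner_sub_left]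
  have h3 : ⟪uvec p x, x - y⟫_ℝ = -⟪uvec p x, y - x⟫_ℝ := by
    rw [show x - y = -(y - x) by abel, inner_neg_right]
  linarith

lemma expand' {d : ℕ} {C : Set (Euc d)} {p : Euc d → Euc d}
    (hpC : ∀ x, p x ∈ C) (hpd : ∀ x, ‖x - p x‖ = infDist x C)
    (hpo : ∀ x, ∀ z ∈ C, ⟪x - p x, z - p x⟫_ℝ ≤ 0)
    {x y : Euc d} (hx : x - p x ≠ 0) (hy : y - p y ≠ 0) {c : ℝ} (hc : 0 ≤ c) :
    ‖x - y‖ ≤ ‖ψmap p c x - ψmap p c y‖ := by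
  have hiden : ψmap p c x - ψmap p c y = (x - y) + c • (uvec p x - uvec p y) := by
    rw [ψmap, ψmap, smul_sub]; abel
  have hinner := umono hpC hpd hpo hx hy
  have hsq : ‖x - y‖ ^ 2 ≤ ‖(x - y) + c • (uvec p x - uvec p y)‖ ^ 2 := by
    rw [norm_add_sq_real]
    have e1 : ⟪x - y, c • (uvec p x - uvec p y)⟫_ℝ = c * ⟪uvec p x - uvec p y, x - y⟫_ℝ := by
      rw [real_inner_smul_right, real_inner_comm]
    nlinarith [sq_nonneg ‖c • (uvec p x - uvec p y)‖, mul_nonneg hc hinner]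
  rw [hiden]
  nlinarith [norm_nonneg (x - y), norm_nonneg ((x - y) + c • (uvec p x - uvec p y))]

lemma lip_image_vol {d : ℕ} {f : Euc d → Euc d} {s : Set (Euc d)}
    (hf : LipschitzOnWith 1 f s) : volume (f '' s) ≤ volume s := by
  set n : ℕ := Module.finrank ℝ (Euc d)
  have hle : μH[(n : ℝ)] (f '' s) ≤ μH[(n : ℝ)] s := by
    simpa using hf.hausdorffMeasure_image_le (Nat.cast_nonneg n)
  have h1 : (volume : Measure (Euc d)) =
      (Measure.addHaarScalarFactor (volume : Measure (Euc d)) μH[(n : ℝ)]) • μH[(n:ℝ)] :=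
    Measure.isAddLeftInvariant_eq_smul _ _
  rw [h1]
  simp only [Measure.smul_apply, smul_eq_mul]
  exact mul_le_mul_right hle _

section Proj

variable {p : Euc d → Euc d}
  (hpC : ∀ x, p x ∈ C) (hpd : ∀ x, ‖x - p x‖ = infDist x C)
  (hpo : ∀ x, ∀ z ∈ C, ⟪x - p x, z - p x⟫_ℝ ≤ 0)

include hpC hpd hpo

lemma ne_proj {x : Euc d} (hx : 0 < infDist x C) : x - p x ≠ 0 := by
  rw [← norm_pos_iff, hpd x]; exact hx

lemma point_eq {x : Euc d} (hx : x - p x ≠ 0) : p x + infDist x C • uvec p x = x := by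
  rw [← hpd x, smul_uvec hx]; abel

lemma uvec_ray {x : Euc d} (hx : x - p x ≠ 0) {t : ℝ} (ht : 0 < t) :
    uvec p (p x + t • uvec p x) = uvec p x := by
  obtain ⟨h1, h2⟩ := ray' hpC hpd hpo hx ht.le
  have hsub : (p x + t • uvec p x) - p (p x + t • uvec p x) = t • uvec p x := by
    rw [h1]; abel
  rw [uvec, hsub, norm_smul, uvec_norm hx, mul_one, Real.norm_eq_abs, abs_of_pos ht,
    smul_smul, inv_mul_cancel₀ ht.ne', one_smul]

lemma psi_fact {x : Euc d} (hx : 0 < infDist x C) {c : ℝ} (hc : 0 < c) :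
    p (ψmap p c x) = p x ∧ infDist (ψmap p c x) C = infDist x C + c ∧
      uvec p (ψmap p c x) = uvec p x := by
  have hx0 := ne_proj hpC hpd hpo hx
  have hid : ψmap p c x = p x + (infDist x C + c) • uvec p x := by
    rw [ψmap, add_smul]
    nth_rewrite 1 [← point_eq hpC hpd hpo hx0]
    abel
  have htpos : 0 < infDist x C + c := by positivity
  obtain ⟨h1, h2⟩ := ray' hpC hpd hpo hx0 htpos.le
  rw [hid]
  exact ⟨h1, h2, uvec_ray hpC hpd hpo hx0 htpos⟩

lemma phi_fact {c : ℝ} (hc : 0 < c) {y : Euc d} (hy : c < infDist y C) :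
    infDist (φmap C p c y) C = infDist y C - c ∧ ψmap p c (φmap C p c y) = y := by
  have hyD : 0 < infDist y C := hc.trans hy
  have hy0 := ne_proj hpC hpd hpo hyD
  have htpos : 0 < infDist y C - c := by linarith
  obtain ⟨h1, h2⟩ := ray' hpC hpd hpo hy0 htpos.le
  have huφ : uvec p (φmap C p c y) = uvec p y := uvec_ray hpC hpd hpo hy0 htpos
  refine ⟨h2, ?_⟩
  rw [ψmap, huφ, φmap]
  have : p y + (infDist y C - c) • uvec p y + c • uvec p y
      = p y + infDist y C • uvec p y := by
    rw [show infDist y C • uvec p y = ((infDist y C - c) + c) • uvec p y by ring_nf, add_smul]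
    abel
  rw [this, point_eq hpC hpd hpo hy0]

/-- The key geometric step. -/
lemma shell_vol {a b c : ℝ} (ha : 0 ≤ a) (hc : 0 < c) :
    volume {x : Euc d | a < infDist x C ∧ infDist x C ≤ b} ≤
      volume {x : Euc d | a + c < infDist x C ∧ infDist x C ≤ b + c} := by
  have hφS : ∀ y : Euc d, a + c < infDist y C → infDist y C ≤ b + c →
      (a < infDist (φmap C p c y) C ∧ infDist (φmap C p c y) C ≤ b) := by
    intro y h1 h2
    have := (phi_fact hpC hpd hpo hc (y := y) (by linarith)).1
    constructor <;> [rw [this]; rw [this]] <;> linarith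
  have hsub : {x : Euc d | a < infDist x C ∧ infDist x C ≤ b} ⊆
      φmap C p c '' {x : Euc d | a + c < infDist x C ∧ infDist x C ≤ b + c} := by
    rintro x ⟨hx1, hx2⟩
    have hxD : 0 < infDist x C := lt_of_le_of_lt ha hx1
    obtain ⟨hp1, hp2, hp3⟩ := psi_fact hpC hpd hpo hxD hc
    have hyT : a + c < infDist (ψmap p c x) C ∧ infDist (ψmap p c x) C ≤ b + c := by
      rw [hp2]; constructor <;> linarith
    refine ⟨ψmap p c x, hyT, ?_⟩
    obtain ⟨hDφ, hφψ⟩ := phi_fact hpC hpd hpo hc (y := ψmap p c x) (by linarith [hyT.1])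
    have hφpos : 0 < infDist (φmap C p c (ψmap p c x)) C := by
      rw [hDφ]; linarith [hyT.1]
    have hinj : ‖φmap C p c (ψmap p c x) - x‖ ≤
        ‖ψmap p c (φmap C p c (ψmap p c x)) - ψmap p c x‖ :=
      expand' hpC hpd hpo (ne_proj hpC hpd hpo hφpos) (ne_proj hpC hpd hpo hxD) hc.le
    rw [hφψ, sub_self, norm_zero] at hinj
    exact sub_eq_zero.mp (norm_le_zero_iff.mp hinj)
  have hlip : LipschitzOnWith 1 (φmap C p c)
      {x : Euc d | a + c < infDist x C ∧ infDist x C ≤ b + c} := by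
    apply LipschitzOnWith.of_dist_le_mul
    rintro y₁ ⟨h₁1, h₁2⟩ y₂ ⟨h₂1, h₂2⟩
    have hD₁ : 0 < infDist (φmap C p c y₁) C := by
      rw [(phi_fact hpC hpd hpo hc (y := y₁) (by linarith)).1]; linarith
    have hD₂ : 0 < infDist (φmap C p c y₂) C := by
      rw [(phi_fact hpC hpd hpo hc (y := y₂) (by linarith)).1]; linarith
    have h := expand' hpC hpd hpo (ne_proj hpC hpd hpo hD₁) (ne_proj hpC hpd hpo hD₂) hc.le
    rw [(phi_fact hpC hpd hpo hc (y := y₁) (by linarith)).2,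
      (phi_fact hpC hpd hpo hc (y := y₂) (by linarith)).2] at h
    rw [NNReal.coe_one, one_mul, dist_eq_norm, dist_eq_norm]
    exact h
  calc volume {x : Euc d | a < infDist x C ∧ infDist x C ≤ b}
      ≤ volume (φmap C p c '' {x : Euc d | a + c < infDist x C ∧ infDist x C ≤ b + c}) :=
        measure_mono hsub
    _ ≤ volume {x : Euc d | a + c < infDist x C ∧ infDist x C ≤ b + c} := lip_image_vol hlip

end Proj

lemma proj_exists {d : ℕ} {C : Set (Euc d)} (hC1 : IsCompact C) (hC2 : Convex ℝ C)
    (hne : C.Nonempty) (x : Euc d) :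
    ∃ y ∈ C, dist x y = infDist x C ∧ ∀ z ∈ C, ⟪x - y, z - y⟫_ℝ ≤ 0 := by
  obtain ⟨y, hyC, hyd⟩ := hC1.exists_infDist_eq_dist hne x
  refine ⟨y, hyC, hyd.symm, ?_⟩
  rw [← norm_eq_iInf_iff_real_inner_le_zero hC2 hyC]
  rw [← dist_eq_norm, ← hyd, infDist_eq_iInf]
  simp only [dist_eq_norm]

/-- the open-closed shell around `C`. -/
def shell {d : ℕ} (C : Set (Euc d)) (a b : ℝ) : Set (Euc d) :=
  {x | a < infDist x C ∧ infDist x C ≤ b}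

lemma shell_meas {d : ℕ} (C : Set (Euc d)) (a b : ℝ) : MeasurableSet (shell C a b) := by
  have h : shell C a b = (fun x => infDist x C) ⁻¹' (Set.Ioc a b) := rfl
  rw [h]
  exact (continuous_infDist_pt C).measurable measurableSet_Ioc

lemma shell_fin {d : ℕ} {C : Set (Euc d)} (hC1 : IsCompact C) (hne : C.Nonempty) (a b : ℝ) :
    volume (shell C a b) ≠ ⊤ := by
  have hsub : shell C a b ⊆ Metric.cthickening b C := by
    intro x hx
    obtain ⟨y, hyC, hyd⟩ := hC1.exists_infDist_eq_dist hne x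
    exact Metric.mem_cthickening_of_dist_le x y b C hyC (by rw [← hyd]; exact hx.2)
  exact ne_top_of_le_ne_top hC1.cthickening.measure_lt_top.ne (measure_mono hsub)

lemma shell_split {d : ℕ} (C : Set (Euc d)) {a b c : ℝ} (hab : a ≤ b) (hbc : b ≤ c) :
    volume (shell C a c) = volume (shell C a b) + volume (shell C b c) := by
  have hunion : shell C a c = shell C a b ∪ shell C b c := by
    ext x
    simp only [shell, Set.mem_setOf_eq, Set.mem_union]
    constructor
    · rintro ⟨h1, h2⟩
      rcases le_or_gt (infDist x C) b with h | h
      · exact Or.inl ⟨h1, h⟩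
      · exact Or.inr ⟨h, h2⟩
    · rintro (⟨h1, h2⟩ | ⟨h1, h2⟩)
      · exact ⟨h1, h2.trans hbc⟩
      · exact ⟨hab.trans_lt h1, h2⟩
  have hdisj : Disjoint (shell C a b) (shell C b c) := by
    rw [Set.disjoint_left]
    rintro x ⟨_, h2⟩ ⟨h3, _⟩
    exact absurd (h2.trans_lt h3) (lt_irrefl _)
  rw [hunion, measure_union hdisj (shell_meas C b c)]

section Grid

variable {p : Euc d → Euc d} (hC1 : IsCompact C)
  (hpC : ∀ x, p x ∈ C) (hpd : ∀ x, ‖x - p x‖ = infDist x C)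
  (hpo : ∀ x, ∀ z ∈ C, ⟪x - p x, z - p x⟫_ℝ ≤ 0)

include hC1 hpC hpd hpo

lemma grid {δ : ℝ} (hδ : 0 < δ) {i j : ℕ} (hi : 1 ≤ i) (hij : i ≤ j) :
    (j : ℝ≥0∞) * volume (shell C 0 (i * δ)) ≤ (i : ℝ≥0∞) * volume (shell C 0 (j * δ)) := by
  set M : ℕ → ℝ≥0∞ := fun k => volume (shell C 0 (k * δ)) with hM
  set E : ℕ → ℝ≥0∞ := fun k => volume (shell C (k * δ) ((k + 1) * δ)) with hE
  have hM0 : M 0 = 0 := by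
    have : shell C 0 ((0:ℕ) * δ) = ∅ := by
      ext x
      simp only [shell, Set.mem_setOf_eq, Nat.cast_zero, zero_mul, Set.mem_empty_iff_false,
        iff_false, not_and, not_le]
      intro h
      exact h
    rw [hM]; simp only [this, measure_empty]
  have hMrec : ∀ k : ℕ, M (k + 1) = M k + E k := by
    intro k
    have hc : ((k:ℝ) + 1) * δ = ((k + 1 : ℕ) : ℝ) * δ := by push_cast; ring
    have h := shell_split C (a := 0) (b := (k:ℝ) * δ) (c := ((k:ℝ)+1) * δ)
      (by positivity) (by nlinarith)
    nth_rewrite 1 [hc] at h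
    exact h
  have hEmono : ∀ k : ℕ, E k ≤ E (k + 1) := by
    intro k
    have h := shell_vol hpC hpd hpo (a := (k:ℝ) * δ) (b := ((k:ℝ)+1) * δ) (c := δ)
      (by positivity) hδ
    have e1 : (k:ℝ) * δ + δ = ((k+1:ℕ):ℝ) * δ := by push_cast; ring
    have e2 : ((k:ℝ)+1) * δ + δ = (((k+1:ℕ):ℝ)+1) * δ := by push_cast; ring
    rw [e1, e2] at h
    exact h
  have hP : ∀ k : ℕ, M k ≤ (k : ℝ≥0∞) * E k := by
    intro k
    induction k with
    | zero => rw [hM0]; exact le_refl _ |>.trans zero_le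
    | succ k ih =>
      calc M (k + 1) = M k + E k := hMrec k
        _ ≤ (k : ℝ≥0∞) * E k + E k := by exact add_le_add_left ih _
        _ = ((k : ℝ≥0∞) + 1) * E k := by ring
        _ ≤ ((k : ℝ≥0∞) + 1) * E (k + 1) := mul_le_mul_right (hEmono k) _
        _ = ((k + 1 : ℕ) : ℝ≥0∞) * E (k + 1) := by push_cast; ring
  have hR : ∀ k : ℕ, ((k + 1 : ℕ) : ℝ≥0∞) * M k ≤ (k : ℝ≥0∞) * M (k + 1) := by
    intro k
    calc ((k + 1 : ℕ) : ℝ≥0∞) * M k = (k : ℝ≥0∞) * M k + M k := by push_cast; ring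
      _ ≤ (k : ℝ≥0∞) * M k + (k : ℝ≥0∞) * E k := add_le_add_right (hP k) _
      _ = (k : ℝ≥0∞) * (M k + E k) := by ring
      _ = (k : ℝ≥0∞) * M (k + 1) := by rw [hMrec k]
  -- now induct j upwards from i
  clear hM0 hMrec hEmono hP
  induction j with
  | zero => omega
  | succ j ihj =>
    rcases Nat.lt_or_ge i (j + 1) with hlt | hge
    · have hij' : i ≤ j := by omega
      have ih := ihj hij'
      have hj1 : (1:ℕ) ≤ j := le_trans hi hij'
      have hjne : (j : ℝ≥0∞) ≠ 0 := by
        exact Nat.cast_ne_zero.mpr (by omega)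
      have hjtop : (j : ℝ≥0∞) ≠ ⊤ := ENNReal.natCast_ne_top j
      have key : (j : ℝ≥0∞) * (((j+1:ℕ) : ℝ≥0∞) * M i) ≤ (j : ℝ≥0∞) * ((i : ℝ≥0∞) * M (j+1)) := by
        calc (j : ℝ≥0∞) * (((j+1:ℕ) : ℝ≥0∞) * M i) = ((j+1:ℕ) : ℝ≥0∞) * ((j : ℝ≥0∞) * M i) := by
              ring
          _ ≤ ((j+1:ℕ) : ℝ≥0∞) * ((i : ℝ≥0∞) * M j) := mul_le_mul_right ih _
          _ = (i : ℝ≥0∞) * (((j+1:ℕ) : ℝ≥0∞) * M j) := by ring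
          _ ≤ (i : ℝ≥0∞) * ((j : ℝ≥0∞) * M (j+1)) := mul_le_mul_right (hR j) _
          _ = (j : ℝ≥0∞) * ((i : ℝ≥0∞) * M (j+1)) := by ring
      exact (ENNReal.mul_le_mul_iff_right hjne hjtop).mp key
    · have : i = j + 1 := by omega
      subst this
      exact le_refl _

end Grid

end Stmt17

/-- for a compact convex set `C` with non-empty interior, the
normalized volume of the `δ`-neighborhood shell `Nbd(C,δ) \ C` is a
non-decreasing function of `δ > 0`. -/
theorem stmt17 (d : ℕ) (C : Set (Euc d)) (hC1 : IsCompact C) (hC2 : Convex ℝ C)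
    (hC3 : (interior C).Nonempty) :
    MonotoneOn
      (fun δ : ℝ => (volume ({x : Euc d | Metric.infDist x C ≤ δ} \ C)).toReal / δ)
      (Set.Ioi (0 : ℝ)) := by
  classical
  have hne : C.Nonempty := hC3.mono interior_subset
  have hclosed : IsClosed C := hC1.isClosed
  choose p hpC hpd0 hpo using Stmt17.proj_exists hC1 hC2 hne
  have hpd : ∀ x, ‖x - p x‖ = Metric.infDist x C := fun x => by
    rw [← dist_eq_norm]; exact hpd0 x
  have hsets : ∀ δ : ℝ, {x : Euc d | Metric.infDist x C ≤ δ} \ C = Stmt17.shell C 0 δ := by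
    intro δ
    ext x
    simp only [Set.mem_diff, Set.mem_setOf_eq, Stmt17.shell]
    rw [hclosed.notMem_iff_infDist_pos hne]
    tauto
  intro δ₁ h1 δ₂ h2 h12
  rw [Set.mem_Ioi] at h1 h2
  show (volume ({x : Euc d | Metric.infDist x C ≤ δ₁} \ C)).toReal / δ₁ ≤
    (volume ({x : Euc d | Metric.infDist x C ≤ δ₂} \ C)).toReal / δ₂
  rw [hsets δ₁, hsets δ₂]
  set F : ℝ → ℝ := fun t => (volume (Stmt17.shell C 0 t)).toReal with hF
  show F δ₁ / δ₁ ≤ F δ₂ / δ₂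
  have hFnn : ∀ t, 0 ≤ F t := fun t => ENNReal.toReal_nonneg
  have hFmono : ∀ {s t : ℝ}, s ≤ t → F s ≤ F t := by
    intro s t hst
    apply ENNReal.toReal_mono (Stmt17.shell_fin hC1 hne 0 t)
    apply measure_mono
    intro x hx
    exact ⟨hx.1, hx.2.trans hst⟩
  have key : ∀ n : ℕ, F δ₁ / δ₁ ≤ F (δ₂ + δ₁ / ((n:ℝ) + 1)) / δ₂ := by
    intro n
    set i : ℕ := n + 1 with hi
    have hicast : ((i:ℕ):ℝ) = (n:ℝ) + 1 := by simp [hi]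
    have hipos : (0:ℝ) < (i:ℝ) := by rw [hicast]; positivity
    set δ : ℝ := δ₁ / ((n:ℝ) + 1) with hδdef
    have hδ : 0 < δ := by positivity
    set j : ℕ := ⌈(i : ℝ) * δ₂ / δ₁⌉₊ with hj
    have hjlb : (i:ℝ) * δ₂ / δ₁ ≤ (j:ℝ) := Nat.le_ceil _
    have hjub : ((j:ℕ):ℝ) < (i:ℝ) * δ₂ / δ₁ + 1 :=
      Nat.ceil_lt_add_one (by positivity)
    have hij : i ≤ j := by
      have h0 : (i:ℝ) ≤ (i:ℝ) * δ₂ / δ₁ := by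
        rw [le_div_iff₀ h1]
        nlinarith
      calc i = ⌈(i:ℝ)⌉₊ := (Nat.ceil_natCast i).symm
        _ ≤ j := Nat.ceil_le_ceil h0
    have hjlb' : (i:ℝ) * δ₂ ≤ (j:ℝ) * δ₁ := by
      rw [div_le_iff₀ h1] at hjlb
      linarith
    have hjub' : (j:ℝ) * δ₁ ≤ (i:ℝ) * δ₂ + δ₁ := by
      rw [div_add' _ _ _ h1.ne', lt_div_iff₀ h1] at hjub
      linarith
    set t : ℝ := (j:ℝ) * δ with htdef
    have hti : t * (i:ℝ) = (j:ℝ) * δ₁ := by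
      rw [htdef, hδdef, ← hicast]
      field_simp
    have ht2 : δ₂ ≤ t := by
      have h' : δ₂ * (i:ℝ) ≤ t * (i:ℝ) := by rw [hti]; nlinarith
      exact le_of_mul_le_mul_right h' hipos
    have htpos : 0 < t := lt_of_lt_of_le h2 ht2
    have hub : t ≤ δ₂ + δ₁ / ((n:ℝ) + 1) := by
      rw [← hicast]
      rw [← mul_le_mul_iff_left₀ hipos]
      rw [add_mul, hti, div_mul_cancel₀ _ hipos.ne']
      linarith
    have hiδ : (i:ℝ) * δ = δ₁ := by
      rw [hδdef, ← hicast]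
      field_simp
    have hgrid := Stmt17.grid hC1 hpC hpd hpo hδ (by omega : 1 ≤ i) hij
    rw [hiδ] at hgrid
    -- convert to reals
    have hfin1 : volume (Stmt17.shell C 0 δ₁) ≠ ⊤ := Stmt17.shell_fin hC1 hne 0 δ₁
    have hfin2 : volume (Stmt17.shell C 0 ((j:ℝ) * δ)) ≠ ⊤ := Stmt17.shell_fin hC1 hne _ _
    have hreal : (j:ℝ) * F δ₁ ≤ (i:ℝ) * F ((j:ℝ) * δ) := by
      have h := ENNReal.toReal_mono
        (ENNReal.mul_ne_top (ENNReal.natCast_ne_top i) hfin2) hgrid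
      rwa [ENNReal.toReal_mul, ENNReal.toReal_mul, ENNReal.toReal_natCast,
        ENNReal.toReal_natCast] at h
    have hdiv1 : F δ₁ / δ₁ ≤ F t / t := by
      rw [div_le_div_iff₀ h1 htpos]
      have hscale : F δ₁ * t * (i:ℝ) ≤ F t * δ₁ * (i:ℝ) := by
        have e1 : F δ₁ * t * (i:ℝ) = ((j:ℝ) * F δ₁) * δ₁ := by
          rw [mul_assoc, hti]; ring
        have e2 : F t * δ₁ * (i:ℝ) = ((i:ℝ) * F t) * δ₁ := by ring
        rw [e1, e2]
        exact mul_le_mul_of_nonneg_right hreal h1.le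
      exact le_of_mul_le_mul_right hscale hipos
    calc F δ₁ / δ₁ ≤ F t / t := hdiv1
      _ ≤ F (δ₂ + δ₁ / ((n:ℝ) + 1)) / δ₂ :=
        div_le_div₀ (hFnn _) (hFmono hub) h2 ht2
  -- limit argument
  have hAnti : Antitone (fun n : ℕ => Stmt17.shell C 0 (δ₂ + δ₁ / ((n:ℝ) + 1))) := by
    intro m n hmn
    have hle : δ₂ + δ₁ / ((n:ℝ) + 1) ≤ δ₂ + δ₁ / ((m:ℝ) + 1) := by
      have hmn' : ((m:ℝ) + 1) ≤ (n:ℝ) + 1 := by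
        have : (m:ℝ) ≤ (n:ℝ) := Nat.cast_le.mpr hmn
        linarith
      have := div_le_div_of_nonneg_left h1.le
        (by positivity : (0:ℝ) < (m:ℝ) + 1) hmn'
      linarith
    intro x hx
    exact ⟨hx.1, hx.2.trans hle⟩
  have hstend : Filter.Tendsto (fun n : ℕ => δ₂ + δ₁ / ((n:ℝ) + 1)) Filter.atTop (nhds δ₂) := by
    have h0 : Filter.Tendsto (fun n : ℕ => δ₁ * (1 / ((n:ℝ) + 1))) Filter.atTop
        (nhds (δ₁ * 0)) := tendsto_one_div_add_atTop_nhds_zero_nat.const_mul δ₁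
    have h0' : Filter.Tendsto (fun n : ℕ => δ₁ / ((n:ℝ) + 1)) Filter.atTop (nhds 0) := by
      simpa [mul_one_div, div_eq_mul_inv] using h0
    simpa using tendsto_const_nhds.add h0'
  have hiInter : (⋂ n : ℕ, Stmt17.shell C 0 (δ₂ + δ₁ / ((n:ℝ) + 1))) = Stmt17.shell C 0 δ₂ := by
    ext x
    simp only [Set.mem_iInter, Stmt17.shell, Set.mem_setOf_eq]
    constructor
    · intro h
      refine ⟨(h 0).1, ?_⟩
      exact ge_of_tendsto hstend (Filter.Eventually.of_forall fun n => (h n).2)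
    · intro h n
      refine ⟨h.1, h.2.trans (le_add_of_nonneg_right (by positivity))⟩
  have hmeaslim : Filter.Tendsto (fun n : ℕ => volume (Stmt17.shell C 0 (δ₂ + δ₁ / ((n:ℝ) + 1))))
      Filter.atTop (nhds (volume (Stmt17.shell C 0 δ₂))) := by
    have h := tendsto_measure_iInter_atTop (μ := volume)
      (fun n => (Stmt17.shell_meas C _ _).nullMeasurableSet) hAnti
      ⟨0, Stmt17.shell_fin hC1 hne _ _⟩
    rwa [hiInter] at h
  have hFt : Filter.Tendsto (fun n : ℕ => F (δ₂ + δ₁ / ((n:ℝ) + 1)) / δ₂) Filter.atTop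
      (nhds (F δ₂ / δ₂)) := by
    have h := (ENNReal.tendsto_toReal (Stmt17.shell_fin hC1 hne 0 δ₂)).comp hmeaslim
    exact h.div_const δ₂
  exact ge_of_tendsto hFt (Filter.Eventually.of_forall key)

end
end

section
/- For every integer d ≥ 1 there exists a constant h_d ≥ 0, depending only on d, such that for every P ∈ 𝒫_d and every log-concave projection f of P, writing φ := log f and M_φ := sup_{x ∈ ℝ^d} φ(x): ∫ φ dP ≥ M_φ − h_d. -/
open MeasureTheory
open scoped ENNReal RealInnerProductSpace

noncomputable section

/-- `log t`, valued in `[−∞,∞)` with `log 0 = −∞`. -/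
def eLog (t : ℝ) : EReal := if t = 0 then ⊥ else ((Real.log t : ℝ) : EReal)


lemma coe_ennreal_eq_coe_toReal {p : ℝ≥0∞} (hp : p ≠ ⊤) :
    ((p : EReal)) = ((p.toReal : ℝ) : EReal) := by
  have hb : (p : EReal) ≠ ⊥ := ((EReal.bot_lt_coe 0).trans_le (EReal.coe_ennreal_nonneg p)).ne'
  have h := EReal.coe_toReal (x := (p : EReal)) (by simpa using hp) hb
  rw [← h, EReal.toReal_coe_ennreal]

lemma ereal_sub_eq {p q : ℝ≥0∞} (hp : p ≠ ⊤) (hq : q ≠ ⊤) :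
    ((p : EReal) - (q : EReal)) = ((p.toReal - q.toReal : ℝ) : EReal) := by
  rw [coe_ennreal_eq_coe_toReal hp, coe_ennreal_eq_coe_toReal hq, ← EReal.coe_sub]

lemma lintegral_ofReal_ne_top {α : Type*} [MeasurableSpace α] {μ : Measure α} {w : α → ℝ}
    (hw : Integrable w μ) : ∫⁻ x, ENNReal.ofReal (w x) ∂μ ≠ ⊤ := by
  have hfin : ∫⁻ x, (‖w x‖₊ : ℝ≥0∞) ∂μ < ⊤ := hw.2
  refine ne_top_of_le_ne_top hfin.ne (lintegral_mono fun x => ?_)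
  rw [← enorm_eq_nnnorm, Real.enorm_eq_ofReal_abs]
  exact ENNReal.ofReal_le_ofReal (le_abs_self _)

lemma eLogInt_lower {d : ℕ} {P : Measure (Euc d)} {u w : Euc d → ℝ}
    (hw : Integrable w P)
    (h : ∀ᵐ x ∂P, 0 < u x ∧ w x ≤ Real.log (u x)) :
    ((∫ x, w x ∂P : ℝ) : EReal) ≤ eLogInt d P u := by
  have hWp : ∫⁻ x, ENNReal.ofReal (w x) ∂P ≠ ⊤ := lintegral_ofReal_ne_top hw
  have hWn : ∫⁻ x, ENNReal.ofReal (-(w x)) ∂P ≠ ⊤ := lintegral_ofReal_ne_top hw.neg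
  have h1 : ∫⁻ x, ENNReal.ofReal (w x) ∂P ≤ ∫⁻ x, logPosPart (u x) ∂P := by
    refine lintegral_mono_ae (h.mono fun x hx => ?_)
    exact ENNReal.ofReal_le_ofReal hx.2
  have h2 : ∫⁻ x, logNegPart (u x) ∂P ≤ ∫⁻ x, ENNReal.ofReal (-(w x)) ∂P := by
    refine lintegral_mono_ae (h.mono fun x hx => ?_)
    show (if u x = 0 then ⊤ else ENNReal.ofReal (-(Real.log (u x)))) ≤ _
    rw [if_neg hx.1.ne']
    exact ENNReal.ofReal_le_ofReal (neg_le_neg hx.2)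
  rw [integral_eq_lintegral_pos_part_sub_lintegral_neg_part hw]
  show ((_ - _ : ℝ) : EReal) ≤ _
  rw [← ereal_sub_eq hWp hWn]
  exact EReal.sub_le_sub (EReal.coe_ennreal_le_coe_ennreal_iff.2 h1)
    (EReal.coe_ennreal_le_coe_ennreal_iff.2 h2)

lemma eLogInt_eq {d : ℕ} {P : Measure (Euc d)} {u : Euc d → ℝ}
    (hpos : ∀ᵐ x ∂P, 0 < u x)
    (hint : Integrable (fun x => Real.log (u x)) P) :
    eLogInt d P u = ((∫ x, Real.log (u x) ∂P : ℝ) : EReal) := by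
  have hWp : ∫⁻ x, ENNReal.ofReal (Real.log (u x)) ∂P ≠ ⊤ := lintegral_ofReal_ne_top hint
  have hWn : ∫⁻ x, ENNReal.ofReal (-(Real.log (u x))) ∂P ≠ ⊤ := lintegral_ofReal_ne_top hint.neg
  have hn : ∫⁻ x, logNegPart (u x) ∂P = ∫⁻ x, ENNReal.ofReal (-(Real.log (u x))) ∂P := by
    refine lintegral_congr_ae (hpos.mono fun x hx => ?_)
    show (if u x = 0 then ⊤ else ENNReal.ofReal (-(Real.log (u x)))) = _
    rw [if_neg hx.ne']
  show ((∫⁻ x, ENNReal.ofReal (Real.log (u x)) ∂P : ℝ≥0∞) : EReal) - _ = _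
  rw [hn, ereal_sub_eq hWp hWn,
    integral_eq_lintegral_pos_part_sub_lintegral_neg_part hint]

lemma integrable_log_of_lintegrals {d : ℕ} {P : Measure (Euc d)} {u : Euc d → ℝ}
    (hm : Measurable u) (hpos : ∀ᵐ x ∂P, 0 < u x)
    (hp : ∫⁻ x, logPosPart (u x) ∂P ≠ ⊤) (hn : ∫⁻ x, logNegPart (u x) ∂P ≠ ⊤) :
    Integrable (fun x => Real.log (u x)) P := by
  refine ⟨(Real.measurable_log.comp hm).aestronglyMeasurable, ?_⟩
  have hb : ∀ᵐ x ∂P, (‖Real.log (u x)‖₊ : ℝ≥0∞) ≤ logPosPart (u x) + logNegPart (u x) := by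
    refine hpos.mono fun x hx => ?_
    rw [← enorm_eq_nnnorm, Real.enorm_eq_ofReal_abs]
    show _ ≤ ENNReal.ofReal (Real.log (u x)) +
      (if u x = 0 then ⊤ else ENNReal.ofReal (-(Real.log (u x))))
    rw [if_neg hx.ne']
    rcases le_total (0:ℝ) (Real.log (u x)) with h | h
    · rw [abs_of_nonneg h]; exact self_le_add_right _ _
    · rw [abs_of_nonpos h]; exact self_le_add_left _ _
  show ∫⁻ x, (‖Real.log (u x)‖₊ : ℝ≥0∞) ∂P < ⊤
  have hmeas : Measurable fun x => ENNReal.ofReal (Real.log (u x)) :=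
    ENNReal.measurable_ofReal.comp (Real.measurable_log.comp hm)
  refine lt_of_le_of_lt (lintegral_mono_ae hb) ?_
  show ∫⁻ a, ENNReal.ofReal (Real.log (u a)) + logNegPart (u a) ∂P < ⊤
  rw [lintegral_add_left hmeas]
  exact ENNReal.add_lt_top.mpr ⟨hp.lt_top, hn.lt_top⟩

lemma ae_pos_of_lintegral_ne_top {d : ℕ} {P : Measure (Euc d)} {u : Euc d → ℝ}
    (hm : Measurable u) (hnn : ∀ x, 0 ≤ u x)
    (hn : ∫⁻ x, logNegPart (u x) ∂P ≠ ⊤) : ∀ᵐ x ∂P, 0 < u x := by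
  have hs : MeasurableSet {x : Euc d | u x = 0} := hm (measurableSet_singleton 0)
  have h1 : ∀ x, Set.indicator {x : Euc d | u x = 0} (fun _ => (⊤ : ℝ≥0∞)) x ≤
      logNegPart (u x) := by
    intro x
    by_cases hx : u x = 0
    · rw [Set.indicator_of_mem (show x ∈ {x : Euc d | u x = 0} from hx)]
      show _ ≤ (if u x = 0 then ⊤ else ENNReal.ofReal (-(Real.log (u x))))
      rw [if_pos hx]
    · rw [Set.indicator_of_notMem (show x ∉ {x : Euc d | u x = 0} from hx)]; exact zero_le
  have h2 : ⊤ * P {x : Euc d | u x = 0} ≤ ∫⁻ x, logNegPart (u x) ∂P := by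
    rw [← setLIntegral_const, ← lintegral_indicator hs fun _ => (⊤ : ℝ≥0∞)]
    exact lintegral_mono h1
  have h0 : P {x : Euc d | u x = 0} = 0 := by
    by_contra hne
    rw [ENNReal.top_mul hne] at h2
    exact hn (top_le_iff.mp h2)
  filter_upwards [measure_eq_zero_iff_ae_notMem.mp h0] with x hx
  exact (hnn x).lt_of_ne fun he => hx he.symm

lemma usc_const_mul {α : Type*} [TopologicalSpace α] {u : α → ℝ}
    (h : UpperSemicontinuous u) {c : ℝ} (hc : 0 < c) :
    UpperSemicontinuous (fun x => c * u x) := by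
  intro x y hy
  have h1 : u x < y / c := (lt_div_iff₀' hc).mpr hy
  filter_upwards [h x (y / c) h1] with z hz
  exact (lt_div_iff₀' hc).mp hz

lemma exp_integral_pos (d : ℕ) (hd : 1 ≤ d) : 0 < ∫ x : Euc d, Real.exp (-‖x‖) := by
  have h := MeasureTheory.measure_unitBall_eq_integral_div_gamma (volume : Measure (Euc d))
    (one_pos)
  have hball : 0 < volume (Metric.ball (0 : Euc d) 1) :=
    Metric.measure_ball_pos _ _ one_pos
  rw [h] at hball
  have h2 := ENNReal.ofReal_pos.mp hball
  have hΓ : 0 < Real.Gamma ((Module.finrank ℝ (Euc d) : ℝ) / 1 + 1) :=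
    Real.Gamma_pos_of_pos (by positivity)
  have h3 : 0 < ∫ x : Euc d, Real.exp (-‖x‖ ^ (1:ℝ)) := by
    have := (div_pos_iff.mp h2)
    rcases this with ⟨ha, _⟩ | ⟨_, hb⟩
    · exact ha
    · exact absurd hΓ (not_lt.mpr hb.le)
  have h4 : (fun x : Euc d => Real.exp (-‖x‖ ^ (1:ℝ))) = fun x : Euc d => Real.exp (-‖x‖) := by
    funext x; rw [Real.rpow_one]
  rwa [h4] at h3

lemma memF_expDen (d : ℕ) (hd : 1 ≤ d) :
    MemF d (fun x => (∫ y : Euc d, Real.exp (-‖y‖))⁻¹ * Real.exp (-‖x‖)) := by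
  have hIpos : 0 < ∫ y : Euc d, Real.exp (-‖y‖) := exp_integral_pos d hd
  have hc : 0 < (∫ y : Euc d, Real.exp (-‖y‖))⁻¹ := inv_pos.2 hIpos
  refine ⟨?_, ?_, ?_, ?_⟩
  · exact (continuous_const.mul (Real.continuous_exp.comp continuous_norm.neg)).upperSemicontinuous
  · intro x; positivity
  · rw [integral_const_mul]; exact inv_mul_cancel₀ hIpos.ne'
  · intro x y t ht0 ht1
    have hx : 0 < (∫ y : Euc d, Real.exp (-‖y‖))⁻¹ * Real.exp (-‖x‖) := by positivity
    have hy : 0 < (∫ y : Euc d, Real.exp (-‖y‖))⁻¹ * Real.exp (-‖y‖) := by positivity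
    have hnorm : ‖(1 - t) • x + t • y‖ ≤ (1 - t) * ‖x‖ + t * ‖y‖ := by
      calc ‖(1 - t) • x + t • y‖ ≤ ‖(1 - t) • x‖ + ‖t • y‖ := norm_add_le _ _
        _ = (1 - t) * ‖x‖ + t * ‖y‖ := by
            rw [norm_smul, norm_smul, Real.norm_eq_abs, Real.norm_eq_abs,
              abs_of_nonneg (by linarith), abs_of_nonneg ht0]
    show _ ≤ (∫ y : Euc d, Real.exp (-‖y‖))⁻¹ * Real.exp (-‖(1 - t) • x + t • y‖)
    rw [Real.rpow_def_of_pos hx, Real.rpow_def_of_pos hy, ← Real.exp_add,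
      Real.log_mul hc.ne' (Real.exp_ne_zero _), Real.log_mul hc.ne' (Real.exp_ne_zero _),
      Real.log_exp, Real.log_exp]
    conv_rhs => rw [← Real.exp_log hc, ← Real.exp_add]
    exact Real.exp_le_exp.mpr (by nlinarith [hnorm])

/-- `∫ φ dP ≥ M_φ − h_d` for `φ = log f`, with the integral valued
in `[−∞,∞)`. -/
theorem stmt19 (d : ℕ) (hd : 1 ≤ d) :
    ∃ h : ℝ, 0 ≤ h ∧
      ∀ P : Measure (Euc d), MemP d P → ∀ f : Euc d → ℝ, IsLCP d P f →
        (⨆ x : Euc d, eLog (f x)) - ((h : ℝ) : EReal) ≤ eLogInt d P f := by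
  refine ⟨2 * d * Real.log 2, by positivity, ?_⟩
  intro P hP f hf
  obtain ⟨hPprob, hPint, -⟩ := hP
  obtain ⟨⟨husc, hnn, hone, hlc⟩, hopt⟩ := hf
  haveI := hPprob
  have hfm : Measurable f := husc.measurable
  have hIpos : 0 < ∫ y : Euc d, Real.exp (-‖y‖) := exp_integral_pos d hd
  -- eLogInt d P f ≠ ⊥
  have hexp_low : ((∫ x, (Real.log (∫ y : Euc d, Real.exp (-‖y‖))⁻¹ - ‖x‖) ∂P : ℝ) : EReal) ≤
      eLogInt d P (fun x => (∫ y : Euc d, Real.exp (-‖y‖))⁻¹ * Real.exp (-‖x‖)) := by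
    refine eLogInt_lower ((integrable_const _).sub hPint) ?_
    refine Filter.Eventually.of_forall fun x => ⟨by positivity, ?_⟩
    rw [Real.log_mul (by positivity) (Real.exp_ne_zero _), Real.log_exp]
    exact le_of_eq (by ring)
  have hbot : eLogInt d P f ≠ ⊥ := by
    intro hb
    have h2 := (hexp_low.trans (hopt _ (memF_expDen d hd)))
    rw [hb] at h2
    exact (EReal.coe_ne_bot _) (le_bot_iff.mp h2)
  have hAn : (∫⁻ x, logNegPart (f x) ∂P) ≠ ⊤ := by
    intro h
    apply hbot
    show ((∫⁻ x, logPosPart (f x) ∂P : ℝ≥0∞) : EReal) -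
      ((∫⁻ x, logNegPart (f x) ∂P : ℝ≥0∞) : EReal) = ⊥
    rw [h, EReal.coe_ennreal_top, EReal.sub_top]
  by_cases hApTop : (∫⁻ x, logPosPart (f x) ∂P) = ⊤
  · have htop : eLogInt d P f = ⊤ := by
      show ((∫⁻ x, logPosPart (f x) ∂P : ℝ≥0∞) : EReal) -
        ((∫⁻ x, logNegPart (f x) ∂P : ℝ≥0∞) : EReal) = ⊤
      rw [hApTop, EReal.coe_ennreal_top, coe_ennreal_eq_coe_toReal hAn, EReal.top_sub_coe]
    rw [htop]; exact le_top
  · have hpos : ∀ᵐ x ∂P, 0 < f x := ae_pos_of_lintegral_ne_top hfm hnn hAn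
    have hint : Integrable (fun x => Real.log (f x)) P :=
      integrable_log_of_lintegrals hfm hpos hApTop hAn
    have hLeq : eLogInt d P f = ((∫ x, Real.log (f x) ∂P : ℝ) : EReal) := eLogInt_eq hpos hint
    rw [hLeq]
    have hsup : ∀ x0 : Euc d, eLog (f x0) ≤
        ((∫ x, Real.log (f x) ∂P + 2 * d * Real.log 2 : ℝ) : EReal) := by
      intro x0
      rcases (hnn x0).lt_or_eq with h0 | h0
      swap
      · show (if f x0 = 0 then (⊥ : EReal) else _) ≤ _
        rw [if_pos h0.symm]; exact bot_le
      -- main comparison with the rescaled density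
      have hcpos : (0:ℝ) < (2:ℝ)⁻¹ ^ d := by positivity
      have hgF : MemF d (fun x => (2:ℝ)⁻¹ ^ d * f ((2⁻¹ : ℝ) • x0 + (2⁻¹ : ℝ) • x)) := by
        refine ⟨?_, ?_, ?_, ?_⟩
        · exact usc_const_mul (husc.comp (g := fun x => (2⁻¹ : ℝ) • x0 + (2⁻¹ : ℝ) • x) (by fun_prop)) hcpos
        · intro x; exact mul_nonneg hcpos.le (hnn _)
        · have h1 : ∫ x : Euc d, f ((2⁻¹:ℝ) • x0 + (2⁻¹:ℝ) • x) =
              |(((2:ℝ)⁻¹) ^ (Module.finrank ℝ (Euc d)))⁻¹| •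
                ∫ y : Euc d, f ((2⁻¹:ℝ) • x0 + y) :=
            Measure.integral_comp_smul volume (fun y => f ((2⁻¹:ℝ) • x0 + y)) 2⁻¹
          have h2 : ∫ y : Euc d, f ((2⁻¹:ℝ) • x0 + y) = ∫ y, f y :=
            integral_add_left_eq_self f ((2⁻¹:ℝ) • x0)
          rw [integral_const_mul, h1, h2, hone, finrank_euclideanSpace_fin, smul_eq_mul,
            mul_one, abs_of_nonneg (by positivity)]
          exact mul_inv_cancel₀ (by positivity)
        · intro x y t ht0 ht1
          have hpt : ((1-t) • ((2⁻¹:ℝ) • x0 + (2⁻¹:ℝ) • x) + t • ((2⁻¹:ℝ) • x0 + (2⁻¹:ℝ) • y))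
              = ((2⁻¹:ℝ) • x0 + (2⁻¹:ℝ) • ((1-t) • x + t • y)) := by module
          have h1 := hlc ((2⁻¹:ℝ) • x0 + (2⁻¹:ℝ) • x) ((2⁻¹:ℝ) • x0 + (2⁻¹:ℝ) • y) t ht0 ht1
          rw [hpt] at h1
          show ((2:ℝ)⁻¹ ^ d * f ((2⁻¹:ℝ) • x0 + (2⁻¹:ℝ) • x)) ^ (1-t) *
              ((2:ℝ)⁻¹ ^ d * f ((2⁻¹:ℝ) • x0 + (2⁻¹:ℝ) • y)) ^ t ≤
            (2:ℝ)⁻¹ ^ d * f ((2⁻¹:ℝ) • x0 + (2⁻¹:ℝ) • ((1-t) • x + t • y))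
          rw [Real.mul_rpow hcpos.le (hnn _), Real.mul_rpow hcpos.le (hnn _)]
          have hsum : (1 - t) + t = 1 := by ring
          calc ((2:ℝ)⁻¹ ^ d) ^ (1-t) * f ((2⁻¹:ℝ) • x0 + (2⁻¹:ℝ) • x) ^ (1-t) *
                (((2:ℝ)⁻¹ ^ d) ^ t * f ((2⁻¹:ℝ) • x0 + (2⁻¹:ℝ) • y) ^ t)
              = ((2:ℝ)⁻¹ ^ d) ^ (1-t) * ((2:ℝ)⁻¹ ^ d) ^ t *
                (f ((2⁻¹:ℝ) • x0 + (2⁻¹:ℝ) • x) ^ (1-t) *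
                  f ((2⁻¹:ℝ) • x0 + (2⁻¹:ℝ) • y) ^ t) := by ring
            _ = (2:ℝ)⁻¹ ^ d * (f ((2⁻¹:ℝ) • x0 + (2⁻¹:ℝ) • x) ^ (1-t) *
                  f ((2⁻¹:ℝ) • x0 + (2⁻¹:ℝ) • y) ^ t) := by
                rw [← Real.rpow_add hcpos, hsum, Real.rpow_one]
            _ ≤ _ := mul_le_mul_of_nonneg_left h1 hcpos.le
      have hle := hopt _ hgF
      rw [hLeq] at hle
      have hw : Integrable (fun x =>
          (Real.log ((2:ℝ)⁻¹ ^ d) + Real.log (f x0) / 2) + Real.log (f x) / 2) P :=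
        (integrable_const _).add (hint.div_const 2)
      have hlow : ((∫ x, ((Real.log ((2:ℝ)⁻¹ ^ d) + Real.log (f x0) / 2) +
          Real.log (f x) / 2) ∂P : ℝ) : EReal) ≤
          eLogInt d P (fun x => (2:ℝ)⁻¹ ^ d * f ((2⁻¹ : ℝ) • x0 + (2⁻¹ : ℝ) • x)) := by
        refine eLogInt_lower hw (hpos.mono fun x hx => ?_)
        have h12 : (1 - 2⁻¹ : ℝ) = 2⁻¹ := by norm_num
        have hmidlb := hlc x0 x 2⁻¹ (by norm_num) (by norm_num)
        rw [h12] at hmidlb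
        have hprodpos : 0 < f x0 ^ ((2:ℝ)⁻¹) * f x ^ ((2:ℝ)⁻¹) := by
          apply mul_pos <;> exact Real.rpow_pos_of_pos (by assumption) _
        have hfmx : 0 < f ((2⁻¹:ℝ) • x0 + (2⁻¹:ℝ) • x) := lt_of_lt_of_le hprodpos hmidlb
        refine ⟨mul_pos hcpos hfmx, ?_⟩
        have hlog1 : Real.log (f x0 ^ ((2:ℝ)⁻¹) * f x ^ ((2:ℝ)⁻¹)) ≤
            Real.log (f ((2⁻¹:ℝ) • x0 + (2⁻¹:ℝ) • x)) := Real.log_le_log hprodpos hmidlb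
        rw [Real.log_mul (Real.rpow_pos_of_pos h0 _).ne' (Real.rpow_pos_of_pos hx _).ne',
          Real.log_rpow h0, Real.log_rpow hx] at hlog1
        have hlog2 : Real.log ((2:ℝ)⁻¹ ^ d * f ((2⁻¹:ℝ) • x0 + (2⁻¹:ℝ) • x)) =
            Real.log ((2:ℝ)⁻¹ ^ d) + Real.log (f ((2⁻¹:ℝ) • x0 + (2⁻¹:ℝ) • x)) :=
          Real.log_mul hcpos.ne' hfmx.ne'
        rw [hlog2]
        linarith
      have hcomb := hlow.trans hle
      have hceq : ∫ x, ((Real.log ((2:ℝ)⁻¹ ^ d) + Real.log (f x0) / 2) +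
          Real.log (f x) / 2) ∂P = (Real.log ((2:ℝ)⁻¹ ^ d) + Real.log (f x0) / 2) +
          (∫ x, Real.log (f x) ∂P) / 2 := by
        rw [integral_add (integrable_const _) (hint.div_const 2), integral_const,
          integral_div, probReal_univ, one_smul]
      rw [hceq] at hcomb
      have hreal : (Real.log ((2:ℝ)⁻¹ ^ d) + Real.log (f x0) / 2) +
          (∫ x, Real.log (f x) ∂P) / 2 ≤ ∫ x, Real.log (f x) ∂P :=
        EReal.coe_le_coe_iff.mp hcomb
      have hlogc : Real.log ((2:ℝ)⁻¹ ^ d) = -(d * Real.log 2) := by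
        rw [Real.log_pow, Real.log_inv]; ring
      rw [hlogc] at hreal
      show (if f x0 = 0 then (⊥ : EReal) else ((Real.log (f x0) : ℝ) : EReal)) ≤ _
      rw [if_neg h0.ne']
      exact EReal.coe_le_coe_iff.mpr (by linarith)
    calc (⨆ x, eLog (f x)) - ((2 * d * Real.log 2 : ℝ) : EReal)
        ≤ ((∫ x, Real.log (f x) ∂P + 2 * d * Real.log 2 : ℝ) : EReal) -
            ((2 * d * Real.log 2 : ℝ) : EReal) := EReal.sub_le_sub (iSup_le hsup) le_rfl
      _ = ((∫ x, Real.log (f x) ∂P : ℝ) : EReal) := by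
          rw [← EReal.coe_sub]; norm_num


end
end
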